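/- arXiv:1109.5310 — 7 statements merged into one kernel-verified Lean document; each statement's English description precedes it below -/
import Mathlib

section
/- For any n ∈ ℕ, d ≥ 0, and any set H ⊆ ℝⁿ, H is ℋ^d-measurable if and only if H ∩ B is ℋ^d-measurable for every Borel set B ⊆ ℝⁿ with 0 < ℋ^d(B) < ∞. -/
open MeasureTheory Set

noncomputable section

/-- Carathéodory measurability with respect to `d`-dimensional Hausdorff measure. -/
def HMeas (n : ℕ) (d : ℝ) (H : Set (EuclideanSpace ℝ (Fin n))) : Prop :=
  ∀ X : Set (EuclideanSpace ℝ (Fin n)),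
    μH[d] (X ∩ H) + μH[d] (X \ H) = μH[d] X

theorem stmt1 (n : ℕ) (d : ℝ) (hd : 0 ≤ d) (H : Set (EuclideanSpace ℝ (Fin n))) :
    HMeas n d H ↔
      ∀ B : Set (EuclideanSpace ℝ (Fin n)), MeasurableSet B →
        0 < μH[d] B → μH[d] B < ⊤ → HMeas n d (H ∩ B) := by
  constructor
  · intro hH B hB _ _ X
    have h1 : μH[d] ((X \ (H ∩ B)) ∩ B) + μH[d] ((X \ (H ∩ B)) \ B) = μH[d] (X \ (H ∩ B)) :=
      measure_inter_add_diff _ hB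
    have h2 : μH[d] (X ∩ B) + μH[d] (X \ B) = μH[d] X := measure_inter_add_diff _ hB
    have e1 : X ∩ (H ∩ B) = (X ∩ B) ∩ H := by ext x; simp only [mem_inter_iff]; tauto
    have e2 : (X \ (H ∩ B)) ∩ B = (X ∩ B) \ H := by
      ext x; simp only [mem_inter_iff, mem_diff, not_and]; tauto
    have e3 : (X \ (H ∩ B)) \ B = X \ B := by
      ext x; simp only [mem_inter_iff, mem_diff, not_and]; tauto
    calc μH[d] (X ∩ (H ∩ B)) + μH[d] (X \ (H ∩ B))
        = μH[d] ((X ∩ B) ∩ H) + (μH[d] ((X ∩ B) \ H) + μH[d] (X \ B)) := by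
          rw [e1, ← h1, e2, e3]
      _ = (μH[d] ((X ∩ B) ∩ H) + μH[d] ((X ∩ B) \ H)) + μH[d] (X \ B) := by
          rw [add_assoc]
      _ = μH[d] (X ∩ B) + μH[d] (X \ B) := by rw [hH (X ∩ B)]
      _ = μH[d] X := h2
  · intro h X
    have hge : μH[d] X ≤ μH[d] (X ∩ H) + μH[d] (X \ H) := by
      calc μH[d] X = μH[d] ((X ∩ H) ∪ (X \ H)) := by rw [inter_union_diff]
        _ ≤ _ := measure_union_le _ _
    rcases eq_or_ne (μH[d] X) ⊤ with htop | hfin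
    · have h1 : μH[d] (X ∩ H) + μH[d] (X \ H) = ⊤ := top_le_iff.mp (htop ▸ hge)
      rw [h1, htop]
    rcases eq_or_ne (μH[d] X) 0 with h0 | hpos
    · have a : μH[d] (X ∩ H) ≤ μH[d] X := measure_mono inter_subset_left
      have b : μH[d] (X \ H) ≤ μH[d] X := measure_mono diff_subset
      rw [h0] at a b
      rw [h0, le_zero_iff.mp a, le_zero_iff.mp b, add_zero]
    · obtain ⟨B, hXB, hBm, hBeq⟩ := exists_measurable_superset (μH[d]) X
      have hpos' : 0 < μH[d] B := by rw [hBeq]; exact pos_iff_ne_zero.mpr hpos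
      have hfin' : μH[d] B < ⊤ := by rw [hBeq]; exact lt_top_iff_ne_top.mpr hfin
      have key := h B hBm hpos' hfin' X
      have e1 : X ∩ (H ∩ B) = X ∩ H := by
        ext x
        simp only [mem_inter_iff]
        constructor
        · rintro ⟨hx, hh, _⟩; exact ⟨hx, hh⟩
        · rintro ⟨hx, hh⟩; exact ⟨hx, hh, hXB hx⟩
      have e2 : X \ (H ∩ B) = X \ H := by
        ext x
        simp only [mem_diff, mem_inter_iff, not_and]
        constructor
        · rintro ⟨hx, h2⟩; exact ⟨hx, fun hh => absurd (hXB hx) (h2 hh)⟩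
        · rintro ⟨hx, h2⟩; exact ⟨hx, fun hh _ => h2 hh⟩
      rw [e1, e2] at key
      exact key
end
end

section
/- Assume the Continuum Hypothesis and let 0 < d < n. Then there exists a family {B_α : α < ω₁} of pairwise disjoint Borel subsets of ℝⁿ, each of finite ℋ^d-measure, such that a set H ⊆ ℝⁿ is ℋ^d-measurable if and only if H ∩ B_α is ℋ^d-measurable for every α < ω₁. -/
open MeasureTheory Set

noncomputable section

/-- The ordinals below `ω₁`. -/
abbrev Omega1 : Type 1 := {o : Ordinal // o < (Cardinal.aleph 1).ord}

/-- `HMeas` is the same as Carathéodory measurability for the outer measure of `μH[d]`. -/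
lemma hmeas_iff_isCaratheodory (n : ℕ) (d : ℝ) (H : Set (EuclideanSpace ℝ (Fin n))) :
    HMeas n d H ↔
      (μH[d] : Measure (EuclideanSpace ℝ (Fin n))).toOuterMeasure.IsCaratheodory H := by
  constructor
  · intro h t
    simp only [Measure.coe_toOuterMeasure]
    exact (h t).symm
  · intro h X
    have := h X
    simp only [Measure.coe_toOuterMeasure] at this
    exact this.symm

lemma isCaratheodory_of_measurableSet (n : ℕ) (d : ℝ)
    {s : Set (EuclideanSpace ℝ (Fin n))} (hs : MeasurableSet s) :
    (μH[d] : Measure (EuclideanSpace ℝ (Fin n))).toOuterMeasure.IsCaratheodory s := by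
  intro t
  simp only [Measure.coe_toOuterMeasure]
  exact (measure_inter_add_diff t hs).symm

theorem stmt6 (n : ℕ) (d : ℝ) (hd : 0 < d) (hdn : d < n)
    (hCH : Cardinal.continuum = Cardinal.aleph 1) :
    ∃ B : Omega1 → Set (EuclideanSpace ℝ (Fin n)),
      Pairwise (Function.onFun Disjoint B) ∧
      (∀ α, MeasurableSet (B α) ∧ μH[d] (B α) < ⊤) ∧
      (∀ H : Set (EuclideanSpace ℝ (Fin n)),
        HMeas n d H ↔ ∀ α, HMeas n d (H ∩ B α)) := by
  classical
  set E := EuclideanSpace ℝ (Fin n) with hE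
  set μ : Measure E := μH[d] with hμ
  -- CH at universe 0
  have hCH0 : Cardinal.continuum.{0} = Cardinal.aleph.{0} 1 := by
    have h1 : Cardinal.lift.{u_1} Cardinal.continuum.{0} = Cardinal.continuum := by
      simp [Cardinal.lift_continuum]
    have h2 : Cardinal.lift.{u_1} (Cardinal.aleph.{0} 1) = Cardinal.aleph 1 := by
      simp [Cardinal.lift_aleph]
    rw [← Cardinal.lift_inj (a := Cardinal.continuum.{0}), h1, h2]
    exact hCH
  -- the collection of measurable sets of finite measure
  set S : Type := {p : Set E // MeasurableSet p ∧ μ p < ⊤} with hS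
  have hSne : Nonempty S := ⟨⟨∅, MeasurableSet.empty, by simp⟩⟩
  -- cardinality of S is at most the continuum
  have hmeasE : (inferInstance : MeasurableSpace E) =
      MeasurableSpace.generateFrom (TopologicalSpace.countableBasis E) :=
    BorelSpace.measurable_eq.trans
      (TopologicalSpace.isBasis_countableBasis E).borel_eq_generateFrom
  have hcardMeas : Cardinal.mk {t : Set E | MeasurableSet t} ≤ Cardinal.continuum := by
    have hb : Cardinal.mk (TopologicalSpace.countableBasis E) ≤ Cardinal.continuum := by
      have := (TopologicalSpace.countable_countableBasis E)
      have h0 : Cardinal.mk (TopologicalSpace.countableBasis E) ≤ Cardinal.aleph0 :=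
        Cardinal.mk_le_aleph0_iff.mpr this.to_subtype
      exact h0.trans Cardinal.aleph0_le_continuum
    have := MeasurableSpace.cardinal_measurableSet_le_continuum hb
    rw [← hmeasE] at this
    exact this
  have hcardS : Cardinal.mk S ≤ Cardinal.continuum := by
    refine le_trans ?_ hcardMeas
    refine Cardinal.mk_le_of_injective (f := fun p : S => (⟨p.1, p.2.1⟩ : {t : Set E | MeasurableSet t})) ?_
    intro a b hab
    simp only [Subtype.mk.injEq] at hab
    exact Subtype.ext hab
  -- get a surjection from Omega1 onto S
  have hOmega1 : Cardinal.mk Omega1 = Cardinal.lift.{1} (Cardinal.aleph.{0} 1) := by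
    have := Ordinal.mk_Iio_ordinal ((Cardinal.aleph.{0} 1).ord)
    rw [Cardinal.card_ord] at this
    exact this
  have hle : Cardinal.lift.{1} (Cardinal.mk S) ≤ Cardinal.lift.{0} (Cardinal.mk Omega1) := by
    rw [Cardinal.lift_uzero, hOmega1]
    calc Cardinal.lift.{1} (Cardinal.mk S) ≤ Cardinal.lift.{1} Cardinal.continuum.{0} :=
          Cardinal.lift_le.mpr hcardS
      _ = Cardinal.lift.{1} (Cardinal.aleph.{0} 1) := by rw [hCH0]
  obtain ⟨g⟩ : Nonempty (S ↪ Omega1) := Cardinal.lift_mk_le'.mp hle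
  set f : Omega1 → S := Function.invFun g with hf
  have hfsurj : Function.Surjective f := Function.invFun_surjective g.injective
  -- the enumerated sets and the disjointified family
  set C : Omega1 → Set E := fun α => (f α).1 with hC
  have hCmeas : ∀ α, MeasurableSet (C α) := fun α => (f α).2.1
  have hCfin : ∀ α, μ (C α) < ⊤ := fun α => (f α).2.2
  -- countability of initial segments
  have hctble : ∀ α : Omega1, ({β : Omega1 | β < α}).Countable := by
    intro α
    rw [Cardinal.countable_iff_lt_aleph_one]
    have e : {β : Omega1 | β < α} ≃ {o : Ordinal.{0} // o ∈ Iio α.1} :=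
      { toFun := fun b => ⟨b.1.1, b.2⟩
        invFun := fun o => ⟨⟨o.1, lt_trans o.2 α.2⟩, o.2⟩
        left_inv := fun b => rfl
        right_inv := fun o => rfl }
    rw [Cardinal.mk_congr e, Ordinal.mk_Iio_ordinal]
    have h1 : (α.1).card < Cardinal.aleph.{0} 1 := Cardinal.lt_ord.mp α.2
    calc Cardinal.lift.{1} (α.1).card < Cardinal.lift.{1} (Cardinal.aleph.{0} 1) :=
          Cardinal.lift_lt.mpr h1
      _ = Cardinal.aleph 1 := by simp [Cardinal.lift_aleph]
  set B : Omega1 → Set E := fun α => C α \ ⋃ β ∈ {β : Omega1 | β < α}, C β with hB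
  have hBsub : ∀ α, B α ⊆ C α := fun α => diff_subset
  have hBmeas : ∀ α, MeasurableSet (B α) := by
    intro α
    exact (hCmeas α).diff (MeasurableSet.biUnion (hctble α) fun β _ => hCmeas β)
  have hBfin : ∀ α, μ (B α) < ⊤ := fun α => lt_of_le_of_lt (measure_mono (hBsub α)) (hCfin α)
  -- B α is disjoint from C β for β < α
  have hBC : ∀ {α β : Omega1}, β < α → Disjoint (B α) (C β) := by
    intro α β hβα
    rw [Set.disjoint_left]
    intro x hx hx'
    exact hx.2 (mem_biUnion hβα hx')
  have hdisj : Pairwise (Function.onFun Disjoint B) := by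
    intro a b hab
    rcases lt_or_gt_of_ne hab with h | h
    · exact ((hBC h).mono_right (hBsub a)).symm
    · exact (hBC h).mono_right (hBsub b)
  -- coverage: every C α is covered by the B β for β ≤ α
  have wf : WellFounded ((· < ·) : Omega1 → Omega1 → Prop) := wellFounded_lt
  have hcover : ∀ α : Omega1, ∀ x, x ∈ C α → ∃ β, β ≤ α ∧ x ∈ B β := by
    intro α
    induction α using wf.induction with
    | _ α ih =>
      intro x hx
      by_cases hxB : x ∈ B α
      · exact ⟨α, le_refl α, hxB⟩
      · have hxU : x ∈ ⋃ β ∈ {β : Omega1 | β < α}, C β := by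
          by_contra h
          exact hxB ⟨hx, h⟩
        obtain ⟨β, hβ, hxβ⟩ := mem_iUnion₂.mp hxU
        obtain ⟨γ, hγ, hxγ⟩ := ih β hβ x hxβ
        exact ⟨γ, le_of_lt (lt_of_le_of_lt hγ hβ), hxγ⟩
  -- conclusion
  refine ⟨B, hdisj, fun α => ⟨hBmeas α, hBfin α⟩, ?_⟩
  intro H
  constructor
  · intro h α
    rw [hmeas_iff_isCaratheodory]
    exact OuterMeasure.isCaratheodory_inter _ ((hmeas_iff_isCaratheodory n d H).mp h)
      (isCaratheodory_of_measurableSet n d (hBmeas α))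
  · intro h X
    rcases eq_or_lt_of_le (le_top : μ X ≤ ⊤) with htop | hfin
    · have h1 : μ X ≤ μ (X ∩ H) + μ (X \ H) := by
        conv_lhs => rw [← Set.inter_union_diff X H]
        exact measure_union_le _ _
      rw [htop] at h1 ⊢
      exact top_le_iff.mp h1
    · obtain ⟨t, hXt, htm, hteq⟩ := exists_measurable_superset μ X
      have htfin : μ t < ⊤ := by rw [hteq]; exact hfin
      obtain ⟨α, hα⟩ := hfsurj ⟨t, htm, htfin⟩
      have hCα : C α = t := congrArg Subtype.val hα
      -- enumerate {β | β ≤ α} by ℕ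
      have hle_ctble : ({β : Omega1 | β ≤ α}).Countable := by
        have : {β : Omega1 | β ≤ α} = {β : Omega1 | β < α} ∪ {α} := by
          ext β; simp [le_iff_lt_or_eq, or_comm]
        rw [this]
        exact (hctble α).union (countable_singleton α)
      obtain ⟨e, he⟩ := hle_ctble.exists_eq_range ⟨α, le_refl α⟩
      -- H ∩ t is Carathéodory measurable
      set D : Omega1 → Set E := fun β => (H ∩ B β) ∩ t with hD
      have hDcar : ∀ β, (μ.toOuterMeasure).IsCaratheodory (D β) := by
        intro β
        exact OuterMeasure.isCaratheodory_inter _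
          ((hmeas_iff_isCaratheodory n d (H ∩ B β)).mp (h β))
          (isCaratheodory_of_measurableSet n d htm)
      have hHt : H ∩ t = ⋃ k : ℕ, D (e k) := by
        ext x
        constructor
        · rintro ⟨hxH, hxt⟩
          obtain ⟨β, hβα, hxβ⟩ := hcover α x (hCα ▸ hxt)
          have : β ∈ range e := he ▸ hβα
          obtain ⟨k, hk⟩ := this
          exact mem_iUnion.mpr ⟨k, ⟨⟨hxH, hk ▸ hxβ⟩, hxt⟩⟩
        · intro hx
          obtain ⟨k, hk⟩ := mem_iUnion.mp hx
          exact ⟨hk.1.1, hk.2⟩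
      have hHtcar : (μ.toOuterMeasure).IsCaratheodory (H ∩ t) := by
        rw [hHt]
        exact OuterMeasure.isCaratheodory_iUnion _ fun k => hDcar (e k)
      have hX1 : X ∩ (H ∩ t) = X ∩ H := by
        ext x
        constructor
        · rintro ⟨h1, h2, _⟩; exact ⟨h1, h2⟩
        · rintro ⟨h1, h2⟩; exact ⟨h1, h2, hXt h1⟩
      have hX2 : X \ (H ∩ t) = X \ H := by
        ext x
        constructor
        · rintro ⟨h1, h2⟩
          exact ⟨h1, fun hH' => h2 ⟨hH', hXt h1⟩⟩
        · rintro ⟨h1, h2⟩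
          exact ⟨h1, fun hH' => h2 hH'.1⟩
      have := hHtcar X
      simp only [Measure.coe_toOuterMeasure] at this
      rw [hX1, hX2] at this
      exact this.symm
end
end

section
/- Fix 0 < α ≤ 1. The set of functions f ∈ C[0,1] such that f is not Hölder continuous of exponent α on any set H ⊆ [0,1] of Hausdorff dimension greater than 1 − α is residual (comeager) in C[0,1] with the supremum norm. Equivalently, for a typical continuous f: for every g : [0,1] → ℝ Hölder continuous of exponent α, the set {x : f(x) = g(x)} has Hausdorff dimension at most 1 − α. -/
open MeasureTheory Set

noncomputable section

/-- The unit interval, as a subset of `ℝ`. -/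
abbrev I01 : Set ℝ := Set.Icc (0 : ℝ) 1

section Auxiliary

open Metric

/-- The set of odd integers, inside `ℝ`. -/
def oddZ : Set ℝ := Set.range (fun k : ℤ => 2 * (k : ℝ) + 1)

lemma oddZ_nonempty : oddZ.Nonempty := ⟨1, 0, by norm_num⟩

/-- Triangle wave: distance to the nearest odd integer. -/
def W (x : ℝ) : ℝ := Metric.infDist x oddZ

lemma W_lipschitz : LipschitzWith 1 W := lipschitz_infDist_pt _

lemma W_nonneg (x : ℝ) : 0 ≤ W x := Metric.infDist_nonneg

lemma W_eq_abs (k : ℤ) {x : ℝ} (hl : 2 * (k : ℝ) ≤ x) (hu : x ≤ 2 * (k : ℝ) + 2) :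
    W x = |x - (2 * (k : ℝ) + 1)| := by
  have hx1 : |x - (2 * (k : ℝ) + 1)| ≤ 1 := abs_le.mpr ⟨by linarith, by linarith⟩
  refine le_antisymm ?_ ?_
  · have hmem : (2 * (k : ℝ) + 1) ∈ oddZ := ⟨k, rfl⟩
    have := Metric.infDist_le_dist_of_mem (x := x) hmem
    rwa [Real.dist_eq] at this
  · by_contra hlt
    push_neg at hlt
    obtain ⟨y, ⟨j, rfl⟩, hy⟩ := (Metric.infDist_lt_iff oddZ_nonempty).mp hlt
    simp only at hy
    rw [Real.dist_eq] at hy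
    have h1 : |x - (2 * (j : ℝ) + 1)| ≥ 1 := by
      rcases lt_or_gt_of_ne (fun h : j = k => by rw [h] at hy; exact lt_irrefl _ hy) with hjk | hjk
      · have : (j : ℝ) ≤ (k : ℝ) - 1 := by exact_mod_cast Int.le_sub_one_of_lt hjk
        have : x - (2 * (j : ℝ) + 1) ≥ 1 := by linarith
        calc (1:ℝ) ≤ x - (2 * (j : ℝ) + 1) := this
        _ ≤ |x - (2 * (j : ℝ) + 1)| := le_abs_self _
      · have : (k : ℝ) + 1 ≤ (j : ℝ) := by exact_mod_cast hjk
        have h2 : (2 * (j : ℝ) + 1) - x ≥ 1 := by linarith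
        calc (1:ℝ) ≤ (2 * (j : ℝ) + 1) - x := h2
        _ ≤ |(2 * (j : ℝ) + 1) - x| := le_abs_self _
        _ = |x - (2 * (j : ℝ) + 1)| := abs_sub_comm _ _
    linarith

lemma W_le_one (x : ℝ) : W x ≤ 1 := by
  have h1 : 2 * (⌊x / 2⌋ : ℝ) ≤ x := by
    have := Int.floor_le (x / 2); linarith
  have h2 : x ≤ 2 * (⌊x / 2⌋ : ℝ) + 2 := by
    have := Int.lt_floor_add_one (x / 2); linarith
  rw [W_eq_abs ⌊x / 2⌋ h1 h2]
  exact abs_le.mpr ⟨by linarith, by linarith⟩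

lemma W_affine (j : ℤ) {x y : ℝ} (hx1 : (j : ℝ) ≤ x) (hx2 : x ≤ (j : ℝ) + 1)
    (hy1 : (j : ℝ) ≤ y) (hy2 : y ≤ (j : ℝ) + 1) : |W x - W y| = |x - y| := by
  rcases Int.even_or_odd j with ⟨k, hk⟩ | ⟨k, hk⟩
  · have hkr : (j : ℝ) = 2 * (k : ℝ) := by rw [hk]; push_cast; ring
    rw [hkr] at hx1 hx2 hy1 hy2
    have ex : W x = (2 * (k : ℝ) + 1) - x := by
      rw [W_eq_abs k (by linarith) (by linarith), abs_of_nonpos (by linarith)]; ring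
    have ey : W y = (2 * (k : ℝ) + 1) - y := by
      rw [W_eq_abs k (by linarith) (by linarith), abs_of_nonpos (by linarith)]; ring
    rw [ex, ey, show (2 * (k : ℝ) + 1) - x - ((2 * (k : ℝ) + 1) - y) = -(x - y) by ring, abs_neg]
  · have hkr : (j : ℝ) = 2 * (k : ℝ) + 1 := by rw [hk]; push_cast; ring
    rw [hkr] at hx1 hx2 hy1 hy2
    have ex : W x = x - (2 * (k : ℝ) + 1) := by
      rw [W_eq_abs k (by linarith) (by linarith), abs_of_nonneg (by linarith)]
    have ey : W y = y - (2 * (k : ℝ) + 1) := by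
      rw [W_eq_abs k (by linarith) (by linarith), abs_of_nonneg (by linarith)]
    rw [ex, ey]; ring_nf


/-- The basic open sets. -/
def goodSet (α : ℝ) (K n N : ℕ) (d : ℝ) : Set C(I01, ℝ) :=
  { f | ∃ r η : ℝ, 0 < N ∧ 0 < r ∧ 0 < η ∧ r ≤ 1 / (n + 1) ∧
      (N : ℝ) * r ^ d ≤ 1 / (n + 1) ∧
      ∀ i : ℕ, i < N → ∀ x y : I01,
        x.1 ∈ Icc ((i : ℝ) / N) ((i + 1) / N) → y.1 ∈ Icc ((i : ℝ) / N) ((i + 1) / N) →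
        r ≤ |x.1 - y.1| → (K : ℝ) * |x.1 - y.1| ^ α + η ≤ |f x - f y| }

lemma isOpen_goodSet (α : ℝ) (K n N : ℕ) (d : ℝ) : IsOpen (goodSet α K n N d) := by
  rw [Metric.isOpen_iff]
  rintro f ⟨r, η, hN, hr, hη, hr1, hNr, hcond⟩
  refine ⟨η / 3, by linarith, ?_⟩
  intro f' hf'
  rw [Metric.mem_ball] at hf'
  refine ⟨r, η / 3, hN, hr, by linarith, hr1, hNr, ?_⟩
  intro i hi x y hx hy hrs
  have h1 : dist (f' x) (f x) ≤ dist f' f := ContinuousMap.dist_apply_le_dist x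
  have h2 : dist (f' y) (f y) ≤ dist f' f := ContinuousMap.dist_apply_le_dist y
  have hc := hcond i hi x y hx hy hrs
  have e1 : |f x - f y| ≤ |f x - f' x| + |f' x - f' y| + |f' y - f y| := by
    have := abs_add_le (f x - f' x) (f' x - f' y)
    have := abs_add_le ((f x - f' x) + (f' x - f' y)) (f' y - f y)
    calc |f x - f y| = |((f x - f' x) + (f' x - f' y)) + (f' y - f y)| := by ring_nf
    _ ≤ |(f x - f' x) + (f' x - f' y)| + |f' y - f y| := abs_add_le _ _
    _ ≤ |f x - f' x| + |f' x - f' y| + |f' y - f y| := by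
        have := abs_add_le (f x - f' x) (f' x - f' y); linarith
  have d1 : |f x - f' x| ≤ dist f' f := by rw [abs_sub_comm, ← Real.dist_eq]; exact h1
  have d2 : |f' y - f y| ≤ dist f' f := by rw [← Real.dist_eq]; exact h2
  linarith

/-- The key elementary inequality. -/
lemma key_ineq {α L r s KK : ℝ} (h0 : 0 < α) (h1 : α ≤ 1) (hL : 0 < L) (hr : 0 < r)
    (hA : KK + 1 ≤ L * r ^ (1 - α)) (hs : r ≤ s) :
    KK * s ^ α + r ^ α ≤ L * s := by
  have hs0 : 0 < s := lt_of_lt_of_le hr hs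
  have hsplit : s ^ α * s ^ (1 - α) = s := by
    rw [← Real.rpow_add hs0]; norm_num
  have h1' : r ^ (1 - α) ≤ s ^ (1 - α) := Real.rpow_le_rpow hr.le hs (by linarith)
  have h2' : r ^ α ≤ s ^ α := Real.rpow_le_rpow hr.le hs h0.le
  have hsa : 0 < s ^ α := Real.rpow_pos_of_pos hs0 _
  calc KK * s ^ α + r ^ α ≤ KK * s ^ α + s ^ α := by linarith
  _ = (KK + 1) * s ^ α := by ring
  _ ≤ (L * r ^ (1 - α)) * s ^ α := mul_le_mul_of_nonneg_right hA hsa.le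
  _ ≤ (L * s ^ (1 - α)) * s ^ α :=
      mul_le_mul_of_nonneg_right (mul_le_mul_of_nonneg_left h1' hL.le) hsa.le
  _ = L * (s ^ α * s ^ (1 - α)) := by ring
  _ = L * s := by rw [hsplit]

set_option maxHeartbeats 1000000 in
lemma dense_iUnion_goodSet (α : ℝ) (h0 : 0 < α) (h1 : α ≤ 1) (K n : ℕ) {d : ℝ}
    (hd : 1 - α < d) : Dense (⋃ N : ℕ, goodSet α K n N d) := by
  have hd0 : 0 < d := lt_of_le_of_lt (by linarith) hd
  rw [Metric.dense_iff]
  intro f₀ ε hε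
  -- polynomial approximation
  obtain ⟨p, hp⟩ := exists_polynomial_near_continuousMap 0 1 f₀ (ε / 2) (by linarith)
  obtain ⟨C₀, hC₀⟩ := (isCompact_Icc (a := (0 : ℝ)) (b := 1)).exists_bound_of_continuousOn
      (p.derivative.continuous.continuousOn)
  set C : ℝ := max C₀ 0 with hCdef
  have hC : 0 ≤ C := le_max_right _ _
  have hlip : ∀ x ∈ I01, ∀ y ∈ I01, |p.eval x - p.eval y| ≤ C * |x - y| := by
    have hl : LipschitzOnWith C.toNNReal (fun x => p.eval x) (Icc 0 1) := by
      refine (convex_Icc (0:ℝ) 1).lipschitzOnWith_of_nnnorm_deriv_le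
        (fun x _ => p.differentiable.differentiableAt) (fun x hx => ?_)
      rw [← NNReal.coe_le_coe, coe_nnnorm, Real.coe_toNNReal _ hC, Polynomial.deriv]
      exact le_trans (hC₀ x hx) (le_max_left _ _)
    intro x hx y hy
    have := lipschitzOnWith_iff_dist_le_mul.mp hl x hx y hy
    rwa [Real.dist_eq, Real.dist_eq, Real.coe_toNNReal _ hC] at this
  set a : ℝ := ε / 4 with hadef
  have ha : 0 < a := by positivity
  set A : ℝ := (K : ℝ) + 1 with hAdef
  have hA0 : 0 < A := by positivity
  set β : ℝ := 1 - α with hβdef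
  have hβ0 : 0 ≤ β := by simp [hβdef]; linarith
  set γ : ℝ := d / β - 1 with hγdef
  set B : ℝ := ((n : ℝ) + 1) * (2 * A / a) ^ (d / β) with hBdef
  have hB0 : 0 < B := by positivity
  obtain ⟨N, hN⟩ := exists_nat_ge
      (max (max ((A * (n + 1) + C) / a + 1) (2 * C / a + 1)) (max 1 (B ^ γ⁻¹)))
  have hN1 : (1 : ℝ) ≤ N := le_trans (le_trans (le_max_left _ _) (le_max_right _ _)) hN
  have hNpos : 0 < N := by exact_mod_cast lt_of_lt_of_le zero_lt_one hN1
  have hNr0 : (0 : ℝ) < N := by exact_mod_cast hNpos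
  have hL1 : A * (n + 1) + C ≤ a * N := by
    have h := le_trans (le_trans (le_max_left _ _) (le_max_left _ _)) hN
    have := (div_le_iff₀ ha).mp (by linarith : (A * (n + 1) + C) / a ≤ (N : ℝ))
    linarith [mul_comm a (N : ℝ)]
  have hL2 : C ≤ a * N / 2 := by
    have h := le_trans (le_trans (le_max_right _ _) (le_max_left _ _)) hN
    have := (div_le_iff₀ ha).mp (by linarith : 2 * C / a ≤ (N : ℝ))
    linarith [mul_comm a (N : ℝ)]
  have hNB : B ^ γ⁻¹ ≤ N := le_trans (le_trans (le_max_right _ _) (le_max_right _ _)) hN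
  set L : ℝ := a * N - C with hLdef
  have hLA : A * (n + 1) ≤ L := by simp only [hLdef]; linarith
  have hL0 : 0 < L := lt_of_lt_of_le (by positivity) hLA
  have hLhalf : a * N / 2 ≤ L := by simp only [hLdef]; linarith
  -- the perturbed function
  set f' : C(I01, ℝ) := ⟨fun x => p.eval x.1 + a * W ((N : ℝ) * x.1),
    ((p.continuous.comp continuous_subtype_val).add (continuous_const.mul
      (W_lipschitz.continuous.comp (continuous_const.mul continuous_subtype_val))))⟩ with hf'def
  have hball : f' ∈ ball f₀ ε := by
    rw [mem_ball]
    have h₁ : dist f' (p.toContinuousMapOn I01) ≤ a := by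
      rw [ContinuousMap.dist_le ha.le]
      intro x
      rw [Real.dist_eq]
      have : f' x - (p.toContinuousMapOn I01) x = a * W ((N : ℝ) * x.1) := by
        simp only [hf'def, ContinuousMap.coe_mk, Polynomial.toContinuousMapOn_apply,
          Polynomial.toContinuousMap_apply]
        ring
      rw [this, abs_mul, abs_of_nonneg ha.le, abs_of_nonneg (W_nonneg _)]
      nlinarith [W_le_one ((N : ℝ) * x.1), W_nonneg ((N : ℝ) * x.1)]
    have h₂ : dist (p.toContinuousMapOn I01) f₀ < ε / 2 := by
      rw [dist_eq_norm]; exact hp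
    calc dist f' f₀ ≤ dist f' (p.toContinuousMapOn I01) + dist (p.toContinuousMapOn I01) f₀ :=
          dist_triangle _ _ _
    _ < a + ε / 2 := by linarith
    _ < ε := by rw [hadef]; linarith
  -- expansion property
  have hexp : ∀ i : ℕ, i < N → ∀ x y : I01,
      x.1 ∈ Icc ((i : ℝ) / N) ((i + 1) / N) → y.1 ∈ Icc ((i : ℝ) / N) ((i + 1) / N) →
      L * |x.1 - y.1| ≤ |f' x - f' y| := by
    intro i hi x y hx hy
    have hNx1 : ((i : ℤ) : ℝ) ≤ (N : ℝ) * x.1 := by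
      push_cast
      calc ((i : ℝ)) = ((i : ℝ) / N) * N := by field_simp
      _ ≤ x.1 * N := mul_le_mul_of_nonneg_right hx.1 hNr0.le
      _ = (N : ℝ) * x.1 := mul_comm _ _
    have hNx2 : (N : ℝ) * x.1 ≤ ((i : ℤ) : ℝ) + 1 := by
      push_cast
      calc (N : ℝ) * x.1 = x.1 * N := mul_comm _ _
      _ ≤ (((i : ℝ) + 1) / N) * N := mul_le_mul_of_nonneg_right hx.2 hNr0.le
      _ = (i : ℝ) + 1 := by field_simp
    have hNy1 : ((i : ℤ) : ℝ) ≤ (N : ℝ) * y.1 := by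
      push_cast
      calc ((i : ℝ)) = ((i : ℝ) / N) * N := by field_simp
      _ ≤ y.1 * N := mul_le_mul_of_nonneg_right hy.1 hNr0.le
      _ = (N : ℝ) * y.1 := mul_comm _ _
    have hNy2 : (N : ℝ) * y.1 ≤ ((i : ℤ) : ℝ) + 1 := by
      push_cast
      calc (N : ℝ) * y.1 = y.1 * N := mul_comm _ _
      _ ≤ (((i : ℝ) + 1) / N) * N := mul_le_mul_of_nonneg_right hy.2 hNr0.le
      _ = (i : ℝ) + 1 := by field_simp
    have hW := W_affine (i : ℤ) hNx1 hNx2 hNy1 hNy2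
    have hWval : |W ((N : ℝ) * x.1) - W ((N : ℝ) * y.1)| = (N : ℝ) * |x.1 - y.1| := by
      rw [hW, show (N : ℝ) * x.1 - (N : ℝ) * y.1 = (N : ℝ) * (x.1 - y.1) by ring, abs_mul,
        abs_of_nonneg hNr0.le]
    have hp' : |p.eval x.1 - p.eval y.1| ≤ C * |x.1 - y.1| := hlip x.1 x.2 y.1 y.2
    have hsum : a * ((N : ℝ) * |x.1 - y.1|) ≤ |f' x - f' y| + C * |x.1 - y.1| := by
      have e1 : a * (W ((N : ℝ) * x.1) - W ((N : ℝ) * y.1)) =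
          (f' x - f' y) - (p.eval x.1 - p.eval y.1) := by
        simp only [hf'def, ContinuousMap.coe_mk]; ring
      have e2 : |a * (W ((N : ℝ) * x.1) - W ((N : ℝ) * y.1))| = a * ((N : ℝ) * |x.1 - y.1|) := by
        rw [abs_mul, abs_of_nonneg ha.le, hWval]
      have e3 : |(f' x - f' y) - (p.eval x.1 - p.eval y.1)| ≤
          |f' x - f' y| + |p.eval x.1 - p.eval y.1| := abs_sub _ _
      rw [← e2, e1]
      exact le_trans e3 (by linarith)
    calc L * |x.1 - y.1| = (a * N - C) * |x.1 - y.1| := by rw [hLdef]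
    _ = a * ((N : ℝ) * |x.1 - y.1|) - C * |x.1 - y.1| := by ring
    _ ≤ |f' x - f' y| := by linarith
  refine ⟨f', hball, ?_⟩
  rw [mem_iUnion]
  rcases eq_or_lt_of_le h1 with hα1 | hαlt
  · -- case α = 1
    set r : ℝ := min (1 / ((n : ℝ) + 1)) ((1 / (((n : ℝ) + 1) * N)) ^ d⁻¹) with hrdef
    have hr0 : 0 < r := by
      apply lt_min (by positivity)
      exact Real.rpow_pos_of_pos (by positivity) _
    refine ⟨N, r, r ^ α, hNpos, hr0, Real.rpow_pos_of_pos hr0 _, min_le_left _ _, ?_, ?_⟩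
    · have h1' : r ^ d ≤ 1 / (((n : ℝ) + 1) * N) := by
        calc r ^ d ≤ ((1 / (((n : ℝ) + 1) * N)) ^ d⁻¹) ^ d :=
              Real.rpow_le_rpow hr0.le (min_le_right _ _) hd0.le
        _ = 1 / (((n : ℝ) + 1) * N) := Real.rpow_inv_rpow (by positivity) hd0.ne'
      calc (N : ℝ) * r ^ d ≤ (N : ℝ) * (1 / (((n : ℝ) + 1) * N)) :=
            mul_le_mul_of_nonneg_left h1' hNr0.le
      _ = 1 / ((n : ℝ) + 1) := by field_simp
    · intro i hi x y hx hy hrs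
      have hLr : (K : ℝ) + 1 ≤ L * r ^ (1 - α) := by
        have h10 : (1 : ℝ) - α = 0 := by rw [hα1]; norm_num
        rw [h10, Real.rpow_zero, mul_one]
        calc (K : ℝ) + 1 = A := hAdef.symm
        _ ≤ A * (n + 1) := le_mul_of_one_le_right hA0.le (by have := Nat.cast_nonneg (α := ℝ) n; linarith)
        _ ≤ L := hLA
      exact le_trans (key_ineq h0 h1 hL0 hr0 hLr hrs) (hexp i hi x y hx hy)
  · -- case α < 1
    have hβpos : 0 < β := by rw [hβdef]; linarith
    have hdβ : 1 < d / β := (one_lt_div hβpos).mpr (by rw [hβdef]; exact hd)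
    have hγpos : 0 < γ := by rw [hγdef]; linarith
    have hAL : 0 < A / L := by positivity
    set r : ℝ := (A / L) ^ β⁻¹ with hrdef
    have hr0 : 0 < r := Real.rpow_pos_of_pos hAL _
    have hrβ : L * r ^ β = A := by
      rw [hrdef, Real.rpow_inv_rpow hAL.le hβpos.ne']
      field_simp
    have hALn : A / L ≤ 1 / ((n : ℝ) + 1) := by
      have h1' : A / L ≤ A / (A * ((n : ℝ) + 1)) := by
        apply div_le_div_of_nonneg_left hA0.le (by positivity)
        exact_mod_cast hLA
      calc A / L ≤ A / (A * ((n : ℝ) + 1)) := h1'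
      _ = 1 / ((n : ℝ) + 1) := by field_simp
    have hr1 : r ≤ 1 / ((n : ℝ) + 1) := by
      have step2 : (1 : ℝ) / ((n : ℝ) + 1) ≤ (1 / ((n : ℝ) + 1)) ^ β := by
        have := Real.rpow_le_rpow_of_exponent_ge (x := 1 / ((n : ℝ) + 1)) (by positivity)
          (by rw [div_le_one (by positivity)]; linarith) (by rw [hβdef]; linarith : β ≤ (1:ℝ))
        rwa [Real.rpow_one] at this
      calc r ≤ ((1 / ((n : ℝ) + 1)) ^ β) ^ β⁻¹ :=
            Real.rpow_le_rpow hAL.le (le_trans hALn step2) (by positivity)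
      _ = 1 / ((n : ℝ) + 1) := Real.rpow_rpow_inv (by positivity) hβpos.ne'
    refine ⟨N, r, r ^ α, hNpos, hr0, Real.rpow_pos_of_pos hr0 _, hr1, ?_, ?_⟩
    · -- N * r ^ d ≤ 1/(n+1)
      have hrd : r ^ d = (A / L) ^ (d / β) := by
        rw [hrdef, ← Real.rpow_mul hAL.le]
        congr 1
        rw [div_eq_mul_inv, mul_comm]
      have hALb : A / L ≤ 2 * A / (a * N) := by
        have h2 : (0:ℝ) < a * (N:ℝ) / 2 := by positivity
        have hstep : A / L ≤ A / (a * N / 2) := by gcongr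
        calc A / L ≤ A / (a * N / 2) := hstep
        _ = 2 * A / (a * N) := by field_simp
      have h5 : (A / L) ^ (d / β) ≤ (2 * A / (a * N)) ^ (d / β) :=
        Real.rpow_le_rpow hAL.le hALb (by positivity)
      have h6 : (2 * A / (a * (N:ℝ))) ^ (d / β) = (2 * A / a) ^ (d / β) * (((N:ℝ)) ^ (d / β))⁻¹ := by
        rw [show 2 * A / (a * (N:ℝ)) = (2 * A / a) * ((N:ℝ))⁻¹ by field_simp,
          Real.mul_rpow (by positivity) (by positivity), Real.inv_rpow (by positivity)]
      have hNγ : B ≤ (N:ℝ) ^ γ := by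
        have h7 : (B ^ γ⁻¹) ^ γ ≤ ((N:ℝ)) ^ γ := Real.rpow_le_rpow (Real.rpow_nonneg hB0.le _) hNB hγpos.le
        rwa [Real.rpow_inv_rpow hB0.le hγpos.ne'] at h7
      have hNγ0 : (0:ℝ) < (N:ℝ) ^ γ := Real.rpow_pos_of_pos hNr0 _
      have hNd : ((N:ℝ)) ^ (d / β) = (N:ℝ) ^ γ * (N:ℝ) := by
        rw [show d / β = γ + 1 by rw [hγdef]; ring, Real.rpow_add hNr0, Real.rpow_one]
      calc (N:ℝ) * r ^ d = (N:ℝ) * (A / L) ^ (d / β) := by rw [hrd]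
      _ ≤ (N:ℝ) * ((2 * A / a) ^ (d / β) * (((N:ℝ)) ^ (d / β))⁻¹) := by
          rw [← h6]; exact mul_le_mul_of_nonneg_left h5 hNr0.le
      _ = (2 * A / a) ^ (d / β) * ((N:ℝ) / ((N:ℝ)) ^ (d / β)) := by ring
      _ = (2 * A / a) ^ (d / β) * ((N:ℝ) ^ γ)⁻¹ := by
          rw [hNd]
          congr 1
          field_simp
      _ ≤ (2 * A / a) ^ (d / β) * B⁻¹ := by
          refine mul_le_mul_of_nonneg_left ?_ (Real.rpow_nonneg (by positivity) _)
          exact inv_anti₀ hB0 hNγ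
      _ = 1 / ((n:ℝ) + 1) := by
          rw [hBdef]
          have hQ : (0:ℝ) < (2 * A / a) ^ (d / β) := by positivity
          field_simp
    · intro i hi x y hx hy hrs
      have hLr : (K : ℝ) + 1 ≤ L * r ^ (1 - α) := by
        rw [← hβdef, hrβ, hAdef]
      exact le_trans (key_ineq h0 h1 hL0 hr0 hLr hrs) (hexp i hi x y hx hy)

end Auxiliary

set_option maxHeartbeats 1000000 in
/-- A typical continuous function on `[0,1]` is not Hölder continuous of exponent `α`
on any set of Hausdorff dimension larger than `1 - α`. -/
theorem stmt12 (α : ℝ) (h0 : 0 < α) (h1 : α ≤ 1) :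
    { f : C(I01, ℝ) | ∀ g : I01 → ℝ,
        (∃ K : ℝ, ∀ x y : I01, |g x - g y| ≤ K * |x.1 - y.1| ^ α) →
        dimH {x : I01 | f x = g x} ≤ ENNReal.ofReal (1 - α) } ∈
      residual C(I01, ℝ) := by
  set D : ℕ → ℝ := fun j => (1 - α) + 1 / (j + 1) with hD
  have hDgt : ∀ j : ℕ, 1 - α < D j := fun j =>
    lt_add_of_pos_right _ (by positivity)
  have hmem : (⋂ K : ℕ, ⋂ n : ℕ, ⋂ j : ℕ, ⋃ N : ℕ, goodSet α K n N (D j)) ∈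
      residual C(I01, ℝ) := by
    refine (countable_iInter_mem).mpr fun K => (countable_iInter_mem).mpr fun n =>
      (countable_iInter_mem).mpr fun j => ?_
    exact residual_of_dense_open (isOpen_iUnion fun N => isOpen_goodSet α K n N (D j))
      (dense_iUnion_goodSet α h0 h1 K n (hDgt j))
  refine Filter.mem_of_superset hmem ?_
  intro f hf
  simp only [mem_iInter] at hf
  intro g hg
  obtain ⟨K₀, hK₀⟩ := hg
  set K : ℕ := ⌈K₀⌉₊ with hKdef
  have hgK : ∀ x y : I01, |g x - g y| ≤ (K : ℝ) * |x.1 - y.1| ^ α := fun x y =>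
    le_trans (hK₀ x y)
      (mul_le_mul_of_nonneg_right (Nat.le_ceil K₀) (Real.rpow_nonneg (abs_nonneg _) _))
  set Z : Set ℝ := Subtype.val '' {x : I01 | f x = g x} with hZ
  have hdim : dimH {x : I01 | f x = g x} ≤ dimH Z :=
    isometry_subtype_coe.antilipschitz.le_dimH_image _
  refine le_trans hdim ?_
  apply dimH_le
  intro d' hd'top
  by_contra hgt
  push_neg at hgt
  have hd'real : 1 - α < (d' : ℝ) := by
    by_contra hle
    push_neg at hle
    have : (d' : ENNReal) ≤ ENNReal.ofReal (1 - α) := by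
      rw [← ENNReal.ofReal_coe_nnreal]
      exact ENNReal.ofReal_le_ofReal hle
    exact absurd this (not_le.mpr hgt)
  have hd'0 : (0:ℝ) ≤ (d' : ℝ) := d'.coe_nonneg
  obtain ⟨j, hj⟩ := exists_nat_one_div_lt (ε := (d' : ℝ) - (1 - α)) (by linarith)
  have hDj : D j ≤ (d' : ℝ) := by
    simp only [hD]
    push_cast at hj ⊢
    linarith
  -- extract witnesses for each m
  have hex : ∀ m : ℕ, ∃ (N : ℕ) (r η : ℝ), 0 < N ∧ 0 < r ∧ 0 < η ∧ r ≤ 1 / (m + 1) ∧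
      (N : ℝ) * r ^ (D j) ≤ 1 / (m + 1) ∧
      ∀ i : ℕ, i < N → ∀ x y : I01,
        x.1 ∈ Icc ((i : ℝ) / N) ((i + 1) / N) → y.1 ∈ Icc ((i : ℝ) / N) ((i + 1) / N) →
        r ≤ |x.1 - y.1| → (K : ℝ) * |x.1 - y.1| ^ α + η ≤ |f x - f y| := by
    intro m
    obtain ⟨N, hN⟩ := mem_iUnion.mp (hf K m j)
    obtain ⟨r, η, hh⟩ := hN
    exact ⟨N, r, η, hh⟩
  choose Nm rm ηm hNm hrm hηm hrm1 hNrm hcond using hex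
  set t : ∀ m : ℕ, Fin (Nm m) → Set ℝ :=
    fun m i => Z ∩ Icc ((i : ℝ) / (Nm m)) (((i : ℝ) + 1) / (Nm m)) with htdef
  have htend : Filter.Tendsto (fun m : ℕ => ENNReal.ofReal (1 / (m + 1)))
      Filter.atTop (nhds 0) := by
    rw [← ENNReal.ofReal_zero]
    exact ENNReal.tendsto_ofReal tendsto_one_div_add_atTop_nhds_zero_nat
  -- diameters
  have hdiam : ∀ m : ℕ, ∀ i : Fin (Nm m),
      EMetric.diam (t m i) ≤ ENNReal.ofReal (rm m) := by
    intro m i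
    apply EMetric.diam_le
    rintro u ⟨⟨xu, hxu, rfl⟩, hu2⟩ v ⟨⟨xv, hxv, rfl⟩, hv2⟩
    have hlt : |xu.1 - xv.1| < rm m := by
      by_contra hge
      push_neg at hge
      have hc := hcond m i.1 i.isLt xu xv hu2 hv2 hge
      have : |f xu - f xv| = |g xu - g xv| := by rw [hxu, hxv]
      rw [this] at hc
      have := hgK xu xv
      linarith [hηm m]
    rw [edist_dist, Real.dist_eq]
    exact ENNReal.ofReal_le_ofReal hlt.le
  -- covering
  have hcov : ∀ m : ℕ, Z ⊆ ⋃ i, t m i := by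
    intro m z hz
    obtain ⟨x, hx, rfl⟩ := hz
    have hz0 : (0:ℝ) ≤ x.1 := x.2.1
    have hz1 : x.1 ≤ 1 := x.2.2
    have hNm0 : (0:ℝ) < (Nm m : ℝ) := by exact_mod_cast hNm m
    obtain ⟨i0, hi0⟩ : ∃ i0 : ℕ, i0 = min ⌊(Nm m : ℝ) * x.1⌋₊ (Nm m - 1) := ⟨_, rfl⟩
    have hi0lt : i0 < Nm m := by
      rw [hi0]
      exact lt_of_le_of_lt (min_le_right _ _) (Nat.sub_lt (hNm m) one_pos)
    refine mem_iUnion.mpr ⟨⟨i0, hi0lt⟩, ⟨⟨x, hx, rfl⟩, ?_, ?_⟩⟩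
    · -- lower bound
      show ((i0 : ℝ)) / (Nm m) ≤ x.1
      rcases le_or_gt ⌊(Nm m : ℝ) * x.1⌋₊ (Nm m - 1) with hcase | hcase
      · have heq : i0 = ⌊(Nm m : ℝ) * x.1⌋₊ := by rw [hi0]; exact min_eq_left hcase
        rw [heq, div_le_iff₀ hNm0]
        calc ((⌊(Nm m : ℝ) * x.1⌋₊ : ℝ)) ≤ (Nm m : ℝ) * x.1 :=
              Nat.floor_le (by positivity)
        _ = x.1 * (Nm m : ℝ) := mul_comm _ _
      · have hge : (Nm m : ℕ) ≤ ⌊(Nm m : ℝ) * x.1⌋₊ := by omega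
        have : (Nm m : ℝ) ≤ (Nm m : ℝ) * x.1 := by
          have := (Nat.le_floor_iff (by positivity)).mp hge
          exact_mod_cast this
        have hx1 : (1:ℝ) ≤ x.1 := by
          nlinarith
        have heq : i0 = Nm m - 1 := by rw [hi0]; exact min_eq_right hcase.le
        rw [heq, div_le_iff₀ hNm0]
        have hle1 : ((Nm m - 1 : ℕ) : ℝ) ≤ (Nm m : ℝ) := by
          exact_mod_cast Nat.sub_le _ _
        nlinarith
    · -- upper bound
      show x.1 ≤ ((i0 : ℝ) + 1) / (Nm m)
      rcases le_or_gt ⌊(Nm m : ℝ) * x.1⌋₊ (Nm m - 1) with hcase | hcase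
      · have heq : i0 = ⌊(Nm m : ℝ) * x.1⌋₊ := by rw [hi0]; exact min_eq_left hcase
        rw [heq, le_div_iff₀ hNm0]
        have := Nat.lt_floor_add_one ((Nm m : ℝ) * x.1)
        calc x.1 * (Nm m : ℝ) = (Nm m : ℝ) * x.1 := mul_comm _ _
        _ ≤ (⌊(Nm m : ℝ) * x.1⌋₊ : ℝ) + 1 := this.le
      · have heq : i0 = Nm m - 1 := by rw [hi0]; exact min_eq_right hcase.le
        rw [heq, le_div_iff₀ hNm0]
        have hcast : ((Nm m - 1 : ℕ) : ℝ) + 1 = (Nm m : ℝ) := by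
          have := Nat.sub_add_cancel (hNm m)
          exact_mod_cast congrArg (Nat.cast : ℕ → ℝ) this
        rw [hcast]
        nlinarith
  -- apply the covering bound
  have hle := MeasureTheory.Measure.hausdorffMeasure_le_liminf_sum (d' : ℝ) Z
      (fun m : ℕ => ENNReal.ofReal (1 / (m + 1))) htend t
      (Filter.Eventually.of_forall fun m => fun i =>
        le_trans (hdiam m i) (ENNReal.ofReal_le_ofReal (hrm1 m)))
      (Filter.Eventually.of_forall hcov)
  -- bound the sums
  have hsum : ∀ m : ℕ, (∑ i : Fin (Nm m), EMetric.diam (t m i) ^ (d' : ℝ)) ≤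
      ENNReal.ofReal (1 / (m + 1)) := by
    intro m
    have hstep : ∀ i : Fin (Nm m), EMetric.diam (t m i) ^ (d' : ℝ) ≤
        ENNReal.ofReal (rm m ^ (d' : ℝ)) := by
      intro i
      calc EMetric.diam (t m i) ^ (d' : ℝ) ≤ (ENNReal.ofReal (rm m)) ^ (d' : ℝ) :=
            ENNReal.rpow_le_rpow (hdiam m i) hd'0
      _ = ENNReal.ofReal (rm m ^ (d' : ℝ)) := ENNReal.ofReal_rpow_of_pos (hrm m)
    calc (∑ i : Fin (Nm m), EMetric.diam (t m i) ^ (d' : ℝ))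
        ≤ ∑ _i : Fin (Nm m), ENNReal.ofReal (rm m ^ (d' : ℝ)) :=
          Finset.sum_le_sum fun i _ => hstep i
    _ = (Nm m : ℕ) * ENNReal.ofReal (rm m ^ (d' : ℝ)) := by
          rw [Finset.sum_const, Finset.card_univ, Fintype.card_fin, nsmul_eq_mul]
    _ = ENNReal.ofReal ((Nm m : ℝ) * rm m ^ (d' : ℝ)) := by
          rw [ENNReal.ofReal_mul (by positivity)]
          congr 1
          simp [ENNReal.ofReal_natCast]
    _ ≤ ENNReal.ofReal ((Nm m : ℝ) * rm m ^ (D j)) := by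
          apply ENNReal.ofReal_le_ofReal
          apply mul_le_mul_of_nonneg_left _ (Nat.cast_nonneg _)
          have hrm_le1 : rm m ≤ 1 := le_trans (hrm1 m) (by
            rw [div_le_one (by positivity)]
            have : (0:ℝ) ≤ (m:ℝ) := Nat.cast_nonneg m
            linarith)
          exact Real.rpow_le_rpow_of_exponent_ge (hrm m) hrm_le1 hDj
    _ ≤ ENNReal.ofReal (1 / (m + 1)) := ENNReal.ofReal_le_ofReal (hNrm m)
  have hμ : μH[(d' : ℝ)] Z = 0 := by
    refine le_antisymm ?_ zero_le
    calc μH[(d' : ℝ)] Z ≤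
        Filter.liminf (fun m : ℕ => ∑ i : Fin (Nm m), EMetric.diam (t m i) ^ (d' : ℝ))
          Filter.atTop := hle
    _ ≤ Filter.liminf (fun m : ℕ => ENNReal.ofReal (1 / (m + 1))) Filter.atTop :=
          Filter.liminf_le_liminf (Filter.Eventually.of_forall hsum)
    _ = 0 := htend.liminf_eq
  rw [hμ] at hd'top
  exact ENNReal.zero_ne_top hd'top
end
end

section
/- Fix 0 < α ≤ 1, K > 0, N, M positive integers. The set D(N,M,K) of f ∈ C[0,1] such that ℋ^{1−α+1/N}_∞({x : f(x) = g(x)}) < 1/M for every g : [0,1] → ℝ that is Hölder continuous of exponent α with constant K, contains a dense open subset of C[0,1]. -/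
open MeasureTheory Set ENNReal

noncomputable section

/-- The `d`-dimensional Hausdorff content (capacity) of a set of reals. -/
def hContent (d : ℝ) (H : Set ℝ) : ℝ≥0∞ :=
  ⨅ (t : ℕ → Set ℝ) (_ : H ⊆ ⋃ i, t i) (_ : ∀ i, ∃ a b : ℝ, t i = Set.Icc a b),
    ∑' i, ⨆ (_ : (t i).Nonempty), EMetric.diam (t i) ^ d

/-! ### The tent (triangle-wave) function -/

def tent (u : ℝ) : ℝ := Real.arccos (Real.cos (Real.pi * u)) / Real.pi

lemma tent_continuous : Continuous tent := by
  unfold tent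
  exact (Real.continuous_arccos.comp (Real.continuous_cos.comp
    (continuous_const.mul continuous_id))).div_const _

lemma tent_nonneg (u : ℝ) : 0 ≤ tent u :=
  div_nonneg (Real.arccos_nonneg _) Real.pi_pos.le

lemma tent_le_one (u : ℝ) : tent u ≤ 1 := by
  rw [tent, div_le_one Real.pi_pos]
  exact Real.arccos_le_pi _

lemma tent_eval_even (k : ℤ) (u : ℝ) (h : u ∈ Icc (2*k : ℝ) (2*k+1)) :
    tent u = u - 2*k := by
  have hπ := Real.pi_pos
  have h1 : Real.pi * u = Real.pi * (u - 2*k) + k * (2 * Real.pi) := by ring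
  have h2 : 0 ≤ Real.pi * (u - 2*k) := by nlinarith [h.1]
  have h3 : Real.pi * (u - 2*k) ≤ Real.pi := by nlinarith [h.2]
  rw [tent, h1, Real.cos_add_int_mul_two_pi, Real.arccos_cos h2 h3]
  field_simp

lemma tent_eval_odd (k : ℤ) (u : ℝ) (h : u ∈ Icc (2*k+1 : ℝ) (2*k+2)) :
    tent u = 2*k+2 - u := by
  have hπ := Real.pi_pos
  have h1 : Real.pi * u = -(Real.pi * (2*k+2-u)) + ((k+1 : ℤ) : ℝ) * (2 * Real.pi) := by
    push_cast; ring
  have h2 : 0 ≤ Real.pi * (2*k+2-u) := by nlinarith [h.2]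
  have h3 : Real.pi * (2*k+2-u) ≤ Real.pi := by nlinarith [h.1]
  rw [tent, h1, Real.cos_add_int_mul_two_pi, Real.cos_neg, Real.arccos_cos h2 h3]
  field_simp

lemma tent_slope (p : ℤ) (u v : ℝ) (hu : u ∈ Icc (p:ℝ) (p+1)) (hv : v ∈ Icc (p:ℝ) (p+1)) :
    |tent u - tent v| = |u - v| := by
  rcases Int.even_or_odd p with ⟨k, hk⟩ | ⟨k, hk⟩
  · have hk' : (p : ℝ) = 2*k := by rw [hk]; push_cast; ring
    rw [hk'] at hu hv
    rw [tent_eval_even k u (by simpa using hu), tent_eval_even k v (by simpa using hv)]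
    ring_nf
  · have hk' : (p : ℝ) = 2*k+1 := by rw [hk]; push_cast; ring
    rw [hk'] at hu hv
    rw [tent_eval_odd k u (by constructor <;> [exact hu.1; linarith [hu.2]]),
        tent_eval_odd k v (by constructor <;> [exact hv.1; linarith [hv.2]])]
    rw [show (2*(k:ℝ)+2-u) - (2*k+2-v) = -(u-v) by ring, abs_neg]

/-! ### The open set -/

def pieceCond (K α : ℝ) (n : ℕ) (r : ℝ) (f : C(I01, ℝ)) : Prop :=
  ∀ p : ℕ, p < n → ∀ x y : I01, (x : ℝ) ∈ Icc ((p:ℝ)/n) (((p:ℝ)+1)/n) →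
    (y : ℝ) ∈ Icc ((p:ℝ)/n) (((p:ℝ)+1)/n) → r ≤ |(x:ℝ) - (y:ℝ)| →
    K * |(x:ℝ) - (y:ℝ)| ^ α < |f x - f y|

def Uset (K α d : ℝ) (M : ℕ) : Set C(I01, ℝ) :=
  {f | ∃ n : ℕ, 0 < n ∧ ∃ r : ℝ, 0 < r ∧ (n:ℝ) * r ^ d < 1 / M ∧ pieceCond K α n r f}

/-! ### Openness -/

lemma Uset_open (K α d : ℝ) (hα : 0 < α) (M : ℕ) : IsOpen (Uset K α d M) := by
  rw [Metric.isOpen_iff]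
  rintro f ⟨n, hn, r, hr, hnr, hcond⟩
  set A : Set (I01 × I01) :=
    {z | r ≤ |(z.1 : ℝ) - (z.2 : ℝ)| ∧ ∃ p : ℕ, p < n ∧
      (z.1 : ℝ) ∈ Icc ((p:ℝ)/n) (((p:ℝ)+1)/n) ∧ (z.2 : ℝ) ∈ Icc ((p:ℝ)/n) (((p:ℝ)+1)/n)} with hA
  have hc1 : Continuous fun z : I01 × I01 => (z.1 : ℝ) :=
    continuous_subtype_val.comp continuous_fst
  have hc2 : Continuous fun z : I01 × I01 => (z.2 : ℝ) :=
    continuous_subtype_val.comp continuous_snd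
  have hAclosed : IsClosed A := by
    have h1 : IsClosed {z : I01 × I01 | r ≤ |(z.1 : ℝ) - (z.2 : ℝ)|} :=
      isClosed_le continuous_const (hc1.sub hc2).abs
    have h2 : IsClosed {z : I01 × I01 | ∃ p : ℕ, p < n ∧
        (z.1 : ℝ) ∈ Icc ((p:ℝ)/n) (((p:ℝ)+1)/n) ∧ (z.2 : ℝ) ∈ Icc ((p:ℝ)/n) (((p:ℝ)+1)/n)} := by
      have : {z : I01 × I01 | ∃ p : ℕ, p < n ∧
          (z.1 : ℝ) ∈ Icc ((p:ℝ)/n) (((p:ℝ)+1)/n) ∧ (z.2 : ℝ) ∈ Icc ((p:ℝ)/n) (((p:ℝ)+1)/n)} =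
          ⋃ p ∈ Finset.range n, ((fun z : I01 × I01 => (z.1 : ℝ)) ⁻¹' Icc ((p:ℝ)/n) (((p:ℝ)+1)/n) ∩
            (fun z : I01 × I01 => (z.2 : ℝ)) ⁻¹' Icc ((p:ℝ)/n) (((p:ℝ)+1)/n)) := by
        ext z
        simp only [mem_setOf_eq]
        constructor
        · rintro ⟨p, hp, hx1, hx2⟩
          exact mem_iUnion₂.2 ⟨p, Finset.mem_range.2 hp, hx1, hx2⟩
        · intro hm
          obtain ⟨p, hp, hx1, hx2⟩ := mem_iUnion₂.1 hm
          exact ⟨p, Finset.mem_range.1 hp, hx1, hx2⟩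
      rw [this]
      exact isClosed_biUnion_finset fun p _ =>
        ((isClosed_Icc.preimage hc1).inter (isClosed_Icc.preimage hc2))
    exact h1.inter h2
  have hAcompact : IsCompact A := hAclosed.isCompact
  have hφcont : Continuous fun z : I01 × I01 => |f z.1 - f z.2| - K * |(z.1:ℝ) - (z.2:ℝ)| ^ α := by
    have hrpow : Continuous fun t : ℝ => t ^ α :=
      continuous_iff_continuousAt.2 fun x => Real.continuousAt_rpow_const x α (Or.inr hα.le)
    exact (((f.continuous.comp continuous_fst).sub (f.continuous.comp continuous_snd)).abs).sub
      (continuous_const.mul (hrpow.comp (hc1.sub hc2).abs))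
  set φ : I01 × I01 → ℝ := fun z => |f z.1 - f z.2| - K * |(z.1:ℝ) - (z.2:ℝ)| ^ α with hφ
  rcases A.eq_empty_or_nonempty with hAe | hAne
  · refine ⟨1, one_pos, fun f' _ => ⟨n, hn, r, hr, hnr, ?_⟩⟩
    intro p hp x y hx hy hxy
    exact absurd (show (x, y) ∈ A from ⟨hxy, p, hp, hx, hy⟩) (by rw [hAe]; simp)
  · obtain ⟨z₀, hz₀, hmin⟩ := hAcompact.exists_isMinOn hAne hφcont.continuousOn
    have hc : 0 < φ z₀ := by
      obtain ⟨hz₀r, p, hp, hz₀1, hz₀2⟩ := hz₀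
      have := hcond p hp z₀.1 z₀.2 hz₀1 hz₀2 hz₀r
      simp only [hφ]
      linarith
    refine ⟨φ z₀ / 2, half_pos hc, fun f' hf' => ⟨n, hn, r, hr, hnr, ?_⟩⟩
    rw [Metric.mem_ball] at hf'
    intro p hp x y hx hy hxy
    have hzA : (x, y) ∈ A := ⟨hxy, p, hp, hx, hy⟩
    have h1 : φ z₀ ≤ φ (x, y) := hmin hzA
    have e1 : |f' x - f x| < φ z₀ / 2 := by
      have h := ContinuousMap.dist_apply_le_dist (f := f') (g := f) x
      rw [Real.dist_eq] at h
      linarith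
    have e2 : |f' y - f y| < φ z₀ / 2 := by
      have h := ContinuousMap.dist_apply_le_dist (f := f') (g := f) y
      rw [Real.dist_eq] at h
      linarith
    have tri : |f x - f y| ≤ |f x - f' x| + |f' x - f' y| + |f' y - f y| := by
      calc |f x - f y| ≤ |f x - f' y| + |f' y - f y| := abs_sub_le _ _ _
        _ ≤ (|f x - f' x| + |f' x - f' y|) + |f' y - f y| := by
            gcongr; exact abs_sub_le _ _ _
    rw [abs_sub_comm (f x) (f' x)] at tri
    simp only [hφ] at h1 hc
    linarith

/-! ### Content bound -/

lemma Uset_subset (K α d : ℝ) (M : ℕ) (hM : 0 < M)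
    (f : C(I01, ℝ)) (hf : f ∈ Uset K α d M) (g : I01 → ℝ)
    (hg : ∀ x y : I01, |g x - g y| ≤ K * |x.1 - y.1| ^ α) :
    hContent d (Subtype.val '' {x : I01 | f x = g x}) < 1 / M := by
  obtain ⟨n, hn, r, hr, hnr, hcond⟩ := hf
  set S : Set ℝ := Subtype.val '' {x : I01 | f x = g x} with hS
  set Sp : ℕ → Set ℝ := fun p => S ∩ Icc ((p:ℝ)/n) (((p:ℝ)+1)/n) with hSp
  have key : ∀ p : ℕ, p < n → ∀ z ∈ Sp p, ∀ w ∈ Sp p, |z - w| < r := by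
    rintro p hp z ⟨⟨x, hx, rfl⟩, hzI⟩ w ⟨⟨y, hy, rfl⟩, hwI⟩
    by_contra hcon
    push_neg at hcon
    have h2 := hcond p hp x y hzI hwI hcon
    have h3 := hg x y
    rw [show f x = g x from hx, show f y = g y from hy] at h2
    linarith
  set t : ℕ → Set ℝ := fun p =>
    if p < n then Icc (sInf (Sp p)) (sInf (Sp p) + r) else Icc 1 0 with ht
  have hbdd : ∀ p, BddBelow (Sp p) :=
    fun p => ⟨(p:ℝ)/n, fun w hw => hw.2.1⟩
  have hcover : S ⊆ ⋃ i, t i := by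
    intro z hz
    have hz01 : z ∈ Icc (0:ℝ) 1 := by obtain ⟨x, _, rfl⟩ := hz; exact x.2
    have hnR : (0:ℝ) < n := by exact_mod_cast hn
    obtain ⟨p, hp, hzp⟩ : ∃ p : ℕ, p < n ∧ z ∈ Icc ((p:ℝ)/n) (((p:ℝ)+1)/n) := by
      rcases le_or_gt n ⌊z * n⌋₊ with hfl | hfl
      · have h1 : (n:ℝ) ≤ z * n := le_trans (by exact_mod_cast hfl) (Nat.floor_le (mul_nonneg hz01.1 (Nat.cast_nonneg n)))
        have hz1 : z = 1 := le_antisymm hz01.2 (by nlinarith)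
        refine ⟨n - 1, Nat.sub_lt hn one_pos, ?_⟩
        have hc : ((n - 1 : ℕ) : ℝ) = (n:ℝ) - 1 := by
          rw [Nat.cast_sub hn]; simp
        constructor
        · rw [hc, hz1, div_le_one hnR]; linarith
        · rw [hc, hz1, le_div_iff₀ hnR]; linarith
      · refine ⟨⌊z * n⌋₊, hfl, ?_⟩
        constructor
        · rw [div_le_iff₀ hnR]
          exact Nat.floor_le (mul_nonneg hz01.1 (Nat.cast_nonneg n))
        · rw [le_div_iff₀ hnR]
          exact (Nat.lt_floor_add_one (z * n)).le
    have hzSp : z ∈ Sp p := ⟨hz, hzp⟩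
    rw [mem_iUnion]
    refine ⟨p, ?_⟩
    simp only [ht, if_pos hp]
    constructor
    · exact csInf_le (hbdd p) hzSp
    · have h1 : z - r ≤ sInf (Sp p) :=
        le_csInf ⟨z, hzSp⟩ fun w hw => by
          have := key p hp z hzSp w hw
          have := abs_lt.1 this
          linarith [this.1, this.2]
      linarith
  have hicc : ∀ i, ∃ a b : ℝ, t i = Icc a b := by
    intro i
    by_cases hi : i < n
    · exact ⟨sInf (Sp i), sInf (Sp i) + r, by simp only [ht, if_pos hi]⟩
    · exact ⟨1, 0, by simp only [ht, if_neg hi]⟩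
  have hle : hContent d S ≤ ∑' i, ⨆ (_ : (t i).Nonempty), EMetric.diam (t i) ^ d :=
    iInf_le_of_le t (iInf_le_of_le hcover (iInf_le_of_le hicc le_rfl))
  have hterm : ∀ p, (⨆ (_ : (t p).Nonempty), EMetric.diam (t p) ^ d) ≤
      if p < n then ENNReal.ofReal r ^ d else 0 := by
    intro p
    by_cases hp : p < n
    · rw [if_pos hp]
      refine iSup_le fun _ => le_of_eq ?_
      simp only [ht, if_pos hp]
      rw [EMetric.diam, Real.ediam_Icc, add_sub_cancel_left]
    · rw [if_neg hp]
      refine iSup_le fun hne => absurd hne ?_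
      simp only [ht, if_neg hp]
      rw [Set.Icc_eq_empty (by norm_num : ¬(1:ℝ) ≤ 0)]
      exact Set.not_nonempty_empty
  have hsum : ∑' p, (if p < n then ENNReal.ofReal r ^ d else 0) =
      (n : ℝ≥0∞) * ENNReal.ofReal r ^ d := by
    rw [tsum_eq_sum (s := Finset.range n) (fun p hp => by
      rw [if_neg (by simpa using hp)])]
    rw [Finset.sum_ite_of_true (fun p hp => by simpa using hp), Finset.sum_const,
      Finset.card_range, nsmul_eq_mul]
  have hfin : (n : ℝ≥0∞) * ENNReal.ofReal r ^ d < 1 / M := by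
    rw [ENNReal.ofReal_rpow_of_pos hr]
    rw [show ((n : ℝ≥0∞)) = ENNReal.ofReal (n : ℝ) by rw [ENNReal.ofReal_natCast]]
    rw [← ENNReal.ofReal_mul (by positivity)]
    rw [show (1 : ℝ≥0∞) / M = ENNReal.ofReal (1 / M) by
      rw [ENNReal.ofReal_div_of_pos (by exact_mod_cast hM), ENNReal.ofReal_one,
        ENNReal.ofReal_natCast]]
    exact (ENNReal.ofReal_lt_ofReal_iff (one_div_pos.2 (by exact_mod_cast hM))).2 hnr
  calc hContent d S ≤ ∑' i, ⨆ (_ : (t i).Nonempty), EMetric.diam (t i) ^ d := hle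
    _ ≤ ∑' p, (if p < n then ENNReal.ofReal r ^ d else 0) := ENNReal.tsum_le_tsum hterm
    _ = (n : ℝ≥0∞) * ENNReal.ofReal r ^ d := hsum
    _ < 1 / M := hfin

/-! ### Density -/

set_option maxHeartbeats 1000000 in
lemma Uset_dense (K α d : ℝ) (h0 : 0 < α) (h1 : α ≤ 1) (hK : 0 < K)
    (hd1 : 1 - α < d) (M : ℕ) (hM : 0 < M) : Dense (Uset K α d M) := by
  have hd0 : 0 < d := lt_of_le_of_lt (by linarith) hd1
  have hMR : (0:ℝ) < M := by exact_mod_cast hM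
  rw [Metric.dense_iff]
  intro F η hη
  -- Step 1 : polynomial approximation, and its Lipschitz constant
  obtain ⟨P, hP⟩ := exists_polynomial_near_continuousMap 0 1 F (η/4) (by positivity)
  set Pc : C(I01, ℝ) := P.toContinuousMapOn I01 with hPc
  have hPcapp : ∀ z : I01, Pc z = P.eval (z:ℝ) := fun z => rfl
  obtain ⟨x₀m, _, hΛ₀'⟩ := isCompact_Icc.exists_isMaxOn (nonempty_Icc.2 zero_le_one)
    ((P.derivative.continuous.abs).continuousOn (s := I01))
  have hΛ₀ : ∀ t ∈ I01, |P.derivative.eval t| ≤ |P.derivative.eval x₀m| :=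
    fun t ht => hΛ₀' ht
  set Λ : ℝ := max (|P.derivative.eval x₀m|) 0 with hΛdef
  have hΛ0 : 0 ≤ Λ := le_max_right _ _
  have hLip : ∀ x y : I01, |P.eval (x:ℝ) - P.eval (y:ℝ)| ≤ Λ * |(x:ℝ) - (y:ℝ)| := by
    intro x y
    have h := (convex_Icc (0:ℝ) 1).lipschitzOnWith_of_nnnorm_deriv_le
      (C := Λ.toNNReal) (f := fun t => P.eval t)
      (fun t _ => P.differentiableAt)
      (fun t ht => by
        rw [Polynomial.deriv]
        have h2 : |P.derivative.eval t| ≤ Λ := le_trans (hΛ₀ t ht) (le_max_left _ _)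
        simpa [← NNReal.coe_le_coe, Real.norm_eq_abs, nnnorm, Real.coe_toNNReal _ hΛ0]
          using h2)
    have h3 := h.dist_le_mul (x:ℝ) x.2 (y:ℝ) y.2
    rw [Real.dist_eq, Real.dist_eq] at h3
    calc |P.eval (x:ℝ) - P.eval (y:ℝ)| ≤ (Λ.toNNReal : ℝ) * |(x:ℝ) - (y:ℝ)| := h3
      _ = Λ * |(x:ℝ) - (y:ℝ)| := by rw [Real.coe_toNNReal _ hΛ0]
  -- Step 2 : choice of parameters
  set β : ℝ := (1 - α) / d with hβdef
  have hβ0 : 0 ≤ β := div_nonneg (by linarith) hd0.le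
  have hβ1 : β < 1 := (div_lt_one hd0).2 hd1
  set B : ℝ := 4 / η * (Λ + 2 * M * K + 1) with hBdef
  have hB0 : 0 < B := by
    have h2 : (0:ℝ) < 2 * M * K := by positivity
    have h4η : 0 < 4 / η := by positivity
    nlinarith
  set x₀ : ℝ := max 1 (B ^ (1/(1-β))) with hx₀def
  set n : ℕ := ⌈x₀⌉₊ + 1 with hndef
  have hn : 0 < n := Nat.succ_pos _
  have hnx₀ : x₀ < (n:ℝ) := by
    have h1 : x₀ ≤ (⌈x₀⌉₊ : ℝ) := Nat.le_ceil x₀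
    have h2 : ((⌈x₀⌉₊ : ℕ) : ℝ) < n := by exact_mod_cast Nat.lt_succ_self _
    linarith
  have hn1 : (1:ℝ) ≤ (n:ℝ) := le_trans (le_max_left _ _) hnx₀.le
  have hnR : (0:ℝ) < n := by linarith
  set c2 : ℝ := 2 * M * (n:ℝ) with hc2def
  have hc2 : 0 < c2 := by positivity
  have hM1 : (1:ℝ) ≤ M := by exact_mod_cast hM
  have hc21 : 1 ≤ c2 := by nlinarith
  set r : ℝ := c2 ^ (-(1/d)) with hrdef
  have hr : 0 < r := Real.rpow_pos_of_pos hc2 _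
  clear_value Pc Λ β B x₀ n c2 r
  have hrd : r ^ d = c2⁻¹ := by
    rw [hrdef, ← Real.rpow_mul hc2.le]
    rw [show -(1/d) * d = -1 by field_simp]
    exact Real.rpow_neg_one c2
  have hra : r ^ (α - 1) = c2 ^ β := by
    rw [hrdef, ← Real.rpow_mul hc2.le, hβdef]
    congr 1
    field_simp
    ring
  -- the small-interval count bound (i)
  have hi : (n:ℝ) * r ^ d < 1 / M := by
    rw [hrd, hc2def]
    have hn0 : (n:ℝ) ≠ 0 := hnR.ne'
    have hM0 : (M:ℝ) ≠ 0 := hMR.ne'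
    rw [show (n:ℝ) * (2 * M * (n:ℝ))⁻¹ = (2*(M:ℝ))⁻¹ by
      field_simp]
    rw [one_div]
    exact inv_strictAnti₀ hMR (by linarith)
  -- the slope bound (ii)
  have hnβ1 : (1:ℝ) ≤ (n:ℝ) ^ β := Real.one_le_rpow hn1 hβ0
  have hβpow : (n:ℝ) ^ (1-β) * (n:ℝ) ^ β = (n:ℝ) := by
    rw [← Real.rpow_add hnR]
    norm_num
  have hgrow : B < (n:ℝ) ^ (1-β) := by
    have e1 : B = (B ^ (1/(1-β))) ^ (1-β) := by
      rw [← Real.rpow_mul hB0.le]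
      rw [show 1/(1-β) * (1-β) = 1 by
        rw [one_div, inv_mul_cancel₀ (by linarith : (1:ℝ)-β ≠ 0)]]
      rw [Real.rpow_one]
    rw [e1]
    exact Real.rpow_lt_rpow (Real.rpow_nonneg hB0.le _)
      (lt_of_le_of_lt (hx₀def ▸ le_max_right 1 (B ^ (1/(1-β)))) hnx₀) (by linarith)
  have hslope : Λ + K * r ^ (α-1) < η/4 * n := by
    have hc2β : c2 ^ β ≤ 2 * M * (n:ℝ) ^ β := by
      rw [hc2def, Real.mul_rpow (by positivity) hnR.le]
      have h2 : (2*(M:ℝ)) ^ β ≤ 2 * M := by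
        calc (2*(M:ℝ)) ^ β ≤ (2*(M:ℝ)) ^ (1:ℝ) :=
              Real.rpow_le_rpow_of_exponent_le (by nlinarith) hβ1.le
          _ = 2 * M := Real.rpow_one _
      exact mul_le_mul_of_nonneg_right h2 (Real.rpow_nonneg hnR.le _)
    have step1 : Λ + K * r ^ (α-1) ≤ (Λ + 2*M*K + 1) * (n:ℝ) ^ β := by
      rw [hra]
      have h3 : K * c2 ^ β ≤ K * (2 * M * (n:ℝ) ^ β) :=
        mul_le_mul_of_nonneg_left hc2β hK.le
      have h4 : Λ ≤ Λ * (n:ℝ) ^ β := by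
        calc Λ = Λ * 1 := (mul_one Λ).symm
          _ ≤ Λ * (n:ℝ) ^ β := mul_le_mul_of_nonneg_left hnβ1 hΛ0
      linarith [h3, h4, hnβ1]
    have step2 : (Λ + 2*M*K + 1) * (n:ℝ) ^ β = η/4 * B * (n:ℝ) ^ β := by
      rw [hBdef]
      field_simp
    have step3 : η/4 * B * (n:ℝ) ^ β < η/4 * (n:ℝ) ^ (1-β) * (n:ℝ) ^ β := by
      have hb : (0:ℝ) < (n:ℝ) ^ β := Real.rpow_pos_of_pos hnR _
      exact mul_lt_mul_of_pos_right
        ((mul_lt_mul_iff_right₀ (show (0:ℝ) < η/4 by positivity)).2 hgrow) hb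
    calc Λ + K * r ^ (α-1) ≤ (Λ + 2*M*K + 1) * (n:ℝ) ^ β := step1
      _ = η/4 * B * (n:ℝ) ^ β := step2
      _ < η/4 * (n:ℝ) ^ (1-β) * (n:ℝ) ^ β := step3
      _ = η/4 * n := by rw [mul_assoc, hβpow]
  -- Step 3 : the perturbed function
  set saw : C(I01, ℝ) := ⟨fun x => η/4 * tent ((n:ℝ) * (x:ℝ)),
    continuous_const.mul (tent_continuous.comp (continuous_const.mul
      continuous_subtype_val))⟩ with hsaw
  set f : C(I01, ℝ) := Pc + saw with hfdef
  refine ⟨f, ⟨Metric.mem_ball.2 ?_, n, hn, r, hr, hi, ?_⟩⟩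
  · -- distance bound
    have hdist1 : dist f Pc ≤ η/4 := by
      rw [ContinuousMap.dist_le (by positivity)]
      intro x
      have : f x - Pc x = η/4 * tent ((n:ℝ) * (x:ℝ)) := by
        rw [hfdef]
        simp [hsaw]
      rw [Real.dist_eq, this, abs_mul, abs_of_nonneg (show (0:ℝ) ≤ η/4 by positivity),
        abs_of_nonneg (tent_nonneg _)]
      nlinarith [tent_le_one ((n:ℝ) * (x:ℝ)), tent_nonneg ((n:ℝ) * (x:ℝ))]
    have hdist2 : dist Pc F < η/4 := by rw [dist_eq_norm]; exact hP
    calc dist f F ≤ dist f Pc + dist Pc F := dist_triangle _ _ _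
      _ < η/4 + η/4 := by linarith
      _ ≤ η := by linarith
  · -- the piece condition
    intro p hp x y hx hy hxy
    set tt : ℝ := |(x:ℝ) - (y:ℝ)| with htt
    have ht0 : 0 < tt := lt_of_lt_of_le hr hxy
    have hxn : (n:ℝ) * (x:ℝ) ∈ Icc (((p:ℤ):ℝ)) (((p:ℤ):ℝ)+1) := by
      have e1 := hx.1; have e2 := hx.2
      rw [div_le_iff₀ hnR] at e1
      rw [le_div_iff₀ hnR] at e2
      constructor <;> push_cast <;> nlinarith
    have hyn : (n:ℝ) * (y:ℝ) ∈ Icc (((p:ℤ):ℝ)) (((p:ℤ):ℝ)+1) := by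
      have e1 := hy.1; have e2 := hy.2
      rw [div_le_iff₀ hnR] at e1
      rw [le_div_iff₀ hnR] at e2
      constructor <;> push_cast <;> nlinarith
    have hsawdiff : |saw x - saw y| = η/4 * ((n:ℝ) * tt) := by
      simp only [hsaw, ContinuousMap.coe_mk]
      rw [← mul_sub, abs_mul, abs_of_nonneg (show (0:ℝ) ≤ η/4 by positivity),
        tent_slope (p:ℤ) _ _ hxn hyn, ← mul_sub, abs_mul, abs_of_nonneg hnR.le]
    have hPdiff : |Pc x - Pc y| ≤ Λ * tt := by
      rw [hPcapp x, hPcapp y]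
      exact hLip x y
    have hfd : η/4 * ((n:ℝ) * tt) - Λ * tt ≤ |f x - f y| := by
      have e1 : saw x - saw y = (f x - f y) - (Pc x - Pc y) := by
        rw [hfdef]
        simp only [ContinuousMap.add_apply]
        ring
      have e2 : |saw x - saw y| ≤ |f x - f y| + |Pc x - Pc y| := by
        rw [e1]
        exact abs_sub _ _
      linarith [hsawdiff ▸ e2]
    have htα : tt ^ α ≤ r ^ (α-1) * tt := by
      have e1 : tt ^ α = tt ^ (α-1) * tt := by
        rw [← Real.rpow_add_one ht0.ne' (α-1)]
        norm_num
      have e2 : tt ^ (α-1) ≤ r ^ (α-1) :=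
        Real.rpow_le_rpow_of_nonpos hr hxy (by linarith)
      rw [e1]
      exact mul_le_mul_of_nonneg_right e2 ht0.le
    have hfin : K * tt ^ α < η/4 * ((n:ℝ) * tt) - Λ * tt := by
      have e3 : K * tt ^ α ≤ K * (r ^ (α-1) * tt) := mul_le_mul_of_nonneg_left htα hK.le
      nlinarith [hslope, ht0]
    calc K * tt ^ α < η/4 * ((n:ℝ) * tt) - Λ * tt := hfin
      _ ≤ |f x - f y| := hfd

/-- The set `D(N,M,K)` of continuous functions `f` such that
`ℋ^{1-α+1/N}_∞({f = g}) < 1/M` for every `g` Hölder of exponent `α` and constant `K`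
contains a dense open subset of `C[0,1]`. -/
theorem stmt13 (α : ℝ) (h0 : 0 < α) (h1 : α ≤ 1) (K : ℝ) (hK : 0 < K)
    (N M : ℕ) (hN : 0 < N) (hM : 0 < M) :
    ∃ U : Set C(I01, ℝ), IsOpen U ∧ Dense U ∧
      U ⊆ { f : C(I01, ℝ) | ∀ g : I01 → ℝ,
        (∀ x y : I01, |g x - g y| ≤ K * |x.1 - y.1| ^ α) →
        hContent (1 - α + 1 / N) (Subtype.val '' {x : I01 | f x = g x}) <
          1 / M } := by
  have hNR : (0:ℝ) < N := by exact_mod_cast hN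
  set d : ℝ := 1 - α + 1 / N with hd
  have hd1 : 1 - α < d := by
    rw [hd]
    have h2 : (0:ℝ) < 1 / N := by positivity
    linarith
  refine ⟨Uset K α d M, Uset_open K α d h0 M, Uset_dense K α d h0 h1 hK hd1 M hM, ?_⟩
  intro f hf g hg
  exact Uset_subset K α d M hM f hf g hg
end
end

section
/- For all positive integers N and M, the set of f ∈ C[0,1] such that ℋ^{1/2+1/N}_∞({x : f(x) = g(x)}) < 1/M for every g : [0,1] → ℝ with total variation Var(g) ≤ 1, contains a dense open subset of C[0,1]. -/
set_option maxHeartbeats 1000000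

open MeasureTheory Set ENNReal

noncomputable section

namespace Stmt15

/-- Triangle wave: distance to the nearest integer. -/
noncomputable def T (u : ℝ) : ℝ := |u - round u|

lemma T_nonneg (u : ℝ) : 0 ≤ T u := abs_nonneg _

lemma T_le_half (u : ℝ) : T u ≤ 1 / 2 := abs_sub_round u

lemma T_lip : LipschitzWith 1 T := by
  refine LipschitzWith.of_dist_le_mul fun u v => ?_
  rw [Real.dist_eq, Real.dist_eq, NNReal.coe_one, one_mul]
  have h1 : ∀ w z : ℝ, T w ≤ |w - z| + T z := by
    intro w z
    calc T w ≤ |w - (round z : ℝ)| := round_le w (round z)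
      _ ≤ |w - z| + |z - round z| := abs_sub_le w z (round z)
  rw [abs_sub_le_iff]
  constructor
  · have := h1 u v; linarith
  · have := h1 v u; rw [abs_sub_comm] at this; linarith

lemma floor_eq_of (a : ℤ) {w : ℝ} (h1 : (a : ℝ) ≤ w) (h2 : w < a + 1) :
    Int.fract w = w - a := by
  have h : ⌊w⌋ = a := Int.floor_eq_iff.mpr ⟨h1, by push_cast; linarith⟩
  rw [Int.fract, h]

lemma T_eval_lower (a : ℤ) {w : ℝ} (h1 : (a : ℝ) ≤ w) (h2 : w ≤ a + 1 / 2) :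
    T w = w - a := by
  have hf : Int.fract w = w - a := floor_eq_of a h1 (by linarith)
  rw [T, abs_sub_round_eq_min, hf, min_eq_left (by linarith)]

lemma T_eval_upper (a : ℤ) {w : ℝ} (h1 : (a : ℝ) + 1 / 2 ≤ w) (h2 : w ≤ a + 1) :
    T w = a + 1 - w := by
  rcases lt_or_eq_of_le h2 with h | h
  · have hf : Int.fract w = w - a := floor_eq_of a (by linarith) (by linarith)
    rw [T, abs_sub_round_eq_min, hf, min_eq_right (by linarith)]
    ring
  · have hf : Int.fract w = w - ((a : ℝ) + 1) := by
      have h' := floor_eq_of (a + 1) (w := w) (by push_cast; linarith) (by push_cast; linarith)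
      push_cast at h'; linarith
    rw [T, abs_sub_round_eq_min, hf, h]
    norm_num

lemma T_steep (j : ℤ) {u v : ℝ} (hu1 : (j : ℝ) / 2 ≤ u) (hu2 : u ≤ ((j : ℝ) + 1) / 2)
    (hv1 : (j : ℝ) / 2 ≤ v) (hv2 : v ≤ ((j : ℝ) + 1) / 2) :
    |T u - T v| = |u - v| := by
  rcases Int.even_or_odd j with ⟨a, rfl⟩ | ⟨a, rfl⟩
  · push_cast at hu1 hu2 hv1 hv2
    rw [T_eval_lower a (by linarith) (le_of_sub_nonneg (by linarith) : u ≤ (a:ℝ) + 1/2),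
        T_eval_lower a (by linarith) (le_of_sub_nonneg (by linarith) : v ≤ (a:ℝ) + 1/2)]
    congr 1; ring
  · push_cast at hu1 hu2 hv1 hv2
    rw [T_eval_upper a (by linarith : (a:ℝ) + 1/2 ≤ u) (by linarith),
        T_eval_upper a (by linarith : (a:ℝ) + 1/2 ≤ v) (by linarith)]
    rw [abs_sub_comm]; congr 1; ring

/-- `f0` is steep with slope `K` on each of the `n` pieces of `[0,1]`. -/
def Steep (f0 : C(I01, ℝ)) (n : ℕ) (K : ℝ) : Prop :=
  ∀ i : ℕ, i < n → ∀ x y : I01,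
    (i : ℝ) / n ≤ (x : ℝ) → (x : ℝ) ≤ ((i : ℝ) + 1) / n →
    (i : ℝ) / n ≤ (y : ℝ) → (y : ℝ) ≤ ((i : ℝ) + 1) / n →
    K * |(x : ℝ) - (y : ℝ)| ≤ |f0 x - f0 y|

lemma Steep.anti {f0 : C(I01, ℝ)} {n : ℕ} {K K' : ℝ} (h : Steep f0 n K)
    (h0 : 0 ≤ K') (hK : K' ≤ K) : Steep f0 n K' := by
  intro i hi x y h1 h2 h3 h4
  exact le_trans (mul_le_mul_of_nonneg_right hK (abs_nonneg _)) (h i hi x y h1 h2 h3 h4)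

lemma exists_piece {n : ℕ} (hn : 0 < n) {x : ℝ} (hx0 : 0 ≤ x) (hx1 : x ≤ 1) :
    ∃ i : ℕ, i < n ∧ (i : ℝ) / n ≤ x ∧ x ≤ ((i : ℝ) + 1) / n := by
  have hnR : (0 : ℝ) < n := by exact_mod_cast hn
  by_cases hfl : ⌊x * n⌋₊ ≤ n - 1
  · refine ⟨⌊x * n⌋₊, by omega, ?_, ?_⟩
    · rw [div_le_iff₀ hnR]
      exact Nat.floor_le (by positivity)
    · rw [le_div_iff₀ hnR]
      exact (Nat.lt_floor_add_one (x * n)).le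
  · refine ⟨n - 1, by omega, ?_, ?_⟩
    · have hx : (n : ℝ) ≤ x * n := by
        have : n ≤ ⌊x * n⌋₊ := by omega
        exact le_trans (by exact_mod_cast this) (Nat.floor_le (by positivity))
      have : (1 : ℝ) ≤ x := by nlinarith
      have hc : ((n - 1 : ℕ) : ℝ) = (n : ℝ) - 1 := by
        rw [Nat.cast_sub hn]; simp
      rw [hc, div_le_iff₀ hnR]
      nlinarith
    · have hc : ((n - 1 : ℕ) : ℝ) = (n : ℝ) - 1 := by
        rw [Nat.cast_sub hn]; simp
      rw [hc, le_div_iff₀ hnR]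
      nlinarith

lemma hContent_le_sum {d : ℝ} (hd : 0 < d) (E : Set ℝ) (n : ℕ) (a b : ℕ → ℝ)
    (hcov : E ⊆ ⋃ i, Icc (a i) (b i)) (hout : ∀ i, n ≤ i → b i < a i) :
    hContent d E ≤ ∑ i ∈ Finset.range n, ENNReal.ofReal (b i - a i) ^ d := by
  have h1 : hContent d E ≤
      ∑' i, ⨆ (_ : (Icc (a i) (b i)).Nonempty), EMetric.diam (Icc (a i) (b i)) ^ d := by
    refine iInf_le_of_le (fun i => Icc (a i) (b i)) ?_
    exact iInf_le_of_le hcov (iInf_le_of_le (fun i => ⟨a i, b i, rfl⟩) le_rfl)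
  refine h1.trans ?_
  rw [tsum_eq_sum (s := Finset.range n) ?_]
  · refine Finset.sum_le_sum fun i _ => ?_
    refine iSup_le fun _ => ?_
    exact (congrArg (· ^ d) (Real.ediam_Icc (a i) (b i))).le
  · intro i hi
    have h : ¬(Icc (a i) (b i)).Nonempty := by
      rw [Set.nonempty_Icc]
      exact not_le.mpr (hout i (by simpa using hi))
    simp [h]

lemma rpow_le_aux {e t ℓ : ℝ} (he0 : 0 < e) (he1 : e ≤ 1) (ht : 0 < t) (hl : 0 ≤ ℓ) :
    ℓ ^ e ≤ t ^ e + t ^ e / t * ℓ := by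
  have hu : 0 ≤ ℓ / t := div_nonneg hl ht.le
  have key : (ℓ / t) ^ e ≤ 1 + ℓ / t := by
    rcases le_or_gt (ℓ / t) 1 with h | h
    · exact (Real.rpow_le_one hu h he0.le).trans (by linarith)
    · calc (ℓ / t) ^ e ≤ (ℓ / t) ^ (1 : ℝ) := Real.rpow_le_rpow_of_exponent_le h.le he1
        _ = ℓ / t := Real.rpow_one _
        _ ≤ 1 + ℓ / t := by linarith
  have heq : ℓ ^ e = t ^ e * (ℓ / t) ^ e := by
    rw [← Real.mul_rpow ht.le hu, mul_div_cancel₀ ℓ ht.ne']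
  calc ℓ ^ e = t ^ e * (ℓ / t) ^ e := heq
    _ ≤ t ^ e * (1 + ℓ / t) :=
      mul_le_mul_of_nonneg_left key (Real.rpow_nonneg ht.le e)
    _ = t ^ e + t ^ e / t * ℓ := by field_simp

lemma exists_lipschitz_near (f : C(I01, ℝ)) {ε : ℝ} (hε : 0 < ε) :
    ∃ (p : C(I01, ℝ)) (L : ℝ), 0 ≤ L ∧ (∀ x y : I01, |p x - p y| ≤ L * |(x : ℝ) - (y : ℝ)|) ∧
      dist f p < ε := by
  obtain ⟨q, hq⟩ := exists_polynomial_near_continuousMap 0 1 f ε hε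
  obtain ⟨C, hC⟩ := (isCompact_Icc (a := (0:ℝ)) (b := 1)).exists_bound_of_continuousOn
    (q.derivative.continuous_aeval).continuousOn
  set L : ℝ := max C 0 with hLdef
  have hL0 : 0 ≤ L := le_max_right _ _
  have hlip : LipschitzOnWith L.toNNReal (fun x => q.eval x) (Set.Icc (0:ℝ) 1) := by
    refine (convex_Icc (0:ℝ) 1).lipschitzOnWith_of_nnnorm_deriv_le
      (fun x _ => q.differentiable.differentiableAt) (fun x hx => ?_)
    rw [← NNReal.coe_le_coe, coe_nnnorm, Real.coe_toNNReal _ hL0, Polynomial.deriv]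
    exact le_trans (hC x hx) (le_max_left _ _)
  refine ⟨q.toContinuousMapOn _, L, hL0, ?_, ?_⟩
  · intro x y
    have := hlip.dist_le_mul x x.2 y y.2
    rw [Real.dist_eq, Real.dist_eq] at this
    simpa [Real.coe_toNNReal _ hL0] using this
  · rw [dist_eq_norm, norm_sub_rev]
    exact hq

lemma exists_steep_near (p : C(I01, ℝ)) {L a : ℝ} (hL : 0 ≤ L) (ha : 0 < a)
    (hlip : ∀ x y : I01, |p x - p y| ≤ L * |(x : ℝ) - (y : ℝ)|) (m : ℕ) (hm : 0 < m) :
    ∃ f0 : C(I01, ℝ), dist p f0 ≤ a / 2 ∧ Steep f0 (2 * m) (a * m - L) := by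
  have hmR : (0 : ℝ) < m := by exact_mod_cast hm
  let s : C(I01, ℝ) := ⟨fun x => a * T (m * (x : ℝ)),
    continuous_const.mul (T_lip.continuous.comp (continuous_const.mul continuous_subtype_val))⟩
  refine ⟨p + s, ?_, ?_⟩
  · rw [dist_self_add_right]
    refine (ContinuousMap.norm_le _ (by linarith)).mpr fun x => ?_
    show ‖a * T ((m : ℝ) * (x : ℝ))‖ ≤ a / 2
    rw [Real.norm_eq_abs, abs_of_nonneg (mul_nonneg ha.le (T_nonneg _))]
    calc a * T (m * (x : ℝ)) ≤ a * (1 / 2) :=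
          mul_le_mul_of_nonneg_left (T_le_half _) ha.le
      _ = a / 2 := by ring
  · intro i hi x y hx1 hx2 hy1 hy2
    push_cast at hx1 hx2 hy1 hy2
    have hb1 : (i : ℝ) ≤ (x : ℝ) * (2 * m) := (div_le_iff₀ (by positivity)).1 hx1
    have hb2 : (x : ℝ) * (2 * m) ≤ (i : ℝ) + 1 := (le_div_iff₀ (by positivity)).1 hx2
    have hb3 : (i : ℝ) ≤ (y : ℝ) * (2 * m) := (div_le_iff₀ (by positivity)).1 hy1
    have hb4 : (y : ℝ) * (2 * m) ≤ (i : ℝ) + 1 := (le_div_iff₀ (by positivity)).1 hy2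
    have hT : |T ((m : ℝ) * x) - T ((m : ℝ) * y)| = |(m : ℝ) * x - (m : ℝ) * y| := by
      refine T_steep (i : ℤ) ?_ ?_ ?_ ?_ <;> push_cast <;> linarith
    have hs : |s x - s y| = a * ((m : ℝ) * |(x : ℝ) - (y : ℝ)|) := by
      show |a * T ((m : ℝ) * x) - a * T ((m : ℝ) * y)| = _
      rw [← mul_sub, abs_mul, abs_of_nonneg ha.le, hT, ← mul_sub, abs_mul,
        abs_of_nonneg hmR.le]
    have habs : |s x - s y| ≤ |(p + s) x - (p + s) y| + |p x - p y| := by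
      have hsplit : s x - s y = ((p + s) x - (p + s) y) - (p x - p y) := by
        simp only [ContinuousMap.add_apply]; ring
      rw [hsplit]
      exact abs_sub _ _
    have hp := hlip x y
    have hTle := abs_nonneg ((x : ℝ) - (y : ℝ))
    nlinarith [hs, habs, hp]

lemma sum_variation (g : I01 → ℝ) (n : ℕ) (hn : 0 < n) :
    ∑ i ∈ Finset.range n,
        eVariationOn g {x : I01 | (i : ℝ) / n ≤ (x : ℝ) ∧ (x : ℝ) ≤ ((i : ℝ) + 1) / n}
      ≤ eVariationOn g univ := by
  have hnR : (0 : ℝ) < n := by exact_mod_cast hn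
  have hmem : ∀ i : ℕ, min ((i : ℝ) / n) 1 ∈ I01 :=
    fun i => ⟨le_min (by positivity) zero_le_one, min_le_right _ _⟩
  set c : ℕ → I01 := fun i => ⟨min ((i : ℝ) / n) 1, hmem i⟩ with hc
  have hcoe : ∀ i : ℕ, i ≤ n → ((c i : ℝ)) = (i : ℝ) / n := by
    intro i hi
    show min ((i : ℝ) / n) 1 = (i : ℝ) / n
    rw [min_eq_left]
    rw [div_le_one hnR]
    exact_mod_cast hi
  have hmono : Monotone c := by
    intro i j hij
    show min ((i : ℝ) / n) 1 ≤ min ((j : ℝ) / n) 1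
    exact min_le_min (by gcongr) le_rfl
  have hP : ∀ i : ℕ, i < n →
      {x : I01 | (i : ℝ) / n ≤ (x : ℝ) ∧ (x : ℝ) ≤ ((i : ℝ) + 1) / n}
        = univ ∩ Icc (c i) (c (i + 1)) := by
    intro i hi
    have e1 : ((i : ℝ) / n ⊓ 1) = (i : ℝ) / n :=
      min_eq_left (by rw [div_le_one hnR]; exact_mod_cast hi.le)
    have e2 : (((i : ℝ) + 1) / n ⊓ 1) = ((i : ℝ) + 1) / n := by
      rw [min_eq_left]
      rw [div_le_one hnR]
      have : ((i + 1 : ℕ) : ℝ) ≤ (n : ℝ) := by exact_mod_cast hi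
      push_cast at this
      linarith
    ext x
    simp only [mem_setOf_eq, univ_inter, mem_Icc, ← Subtype.coe_le_coe]
    push_cast
    rw [hcoe i hi.le, hcoe (i + 1) hi, Nat.cast_succ]
  have key : ∀ k : ℕ, k ≤ n →
      ∑ i ∈ Finset.range k, eVariationOn g (univ ∩ Icc (c i) (c (i + 1)))
        = eVariationOn g (univ ∩ Icc (c 0) (c k)) := by
    intro k
    induction k with
    | zero =>
      intro _
      rw [Finset.sum_range_zero]
      symm
      refine eVariationOn.subsingleton g ?_
      intro x hx y hy
      have hx' : x = c 0 := le_antisymm hx.2.2 hx.2.1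
      have hy' : y = c 0 := le_antisymm hy.2.2 hy.2.1
      rw [hx', hy']
    | succ k ih =>
      intro hk
      rw [Finset.sum_range_succ, ih (by omega),
        eVariationOn.Icc_add_Icc g (hmono (Nat.zero_le k)) (hmono (Nat.le_succ k))
          (mem_univ _)]
  calc ∑ i ∈ Finset.range n,
        eVariationOn g {x : I01 | (i : ℝ) / n ≤ (x : ℝ) ∧ (x : ℝ) ≤ ((i : ℝ) + 1) / n}
      = ∑ i ∈ Finset.range n, eVariationOn g (univ ∩ Icc (c i) (c (i + 1))) := by
        refine Finset.sum_congr rfl fun i hi => ?_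
        rw [hP i (Finset.mem_range.1 hi)]
    _ = eVariationOn g (univ ∩ Icc (c 0) (c n)) := key n le_rfl
    _ ≤ eVariationOn g univ := eVariationOn.mono g inter_subset_left


end Stmt15

/-- For all positive integers `N, M`, the set of `f ∈ C[0,1]` such that
`ℋ^{1/2+1/N}_∞({f = g}) < 1/M` for every `g` with total variation at most `1`
contains a dense open subset of `C[0,1]`. -/
theorem stmt15 (N M : ℕ) (hN : 0 < N) (hM : 0 < M) :
    ∃ U : Set C(I01, ℝ), IsOpen U ∧ Dense U ∧
      U ⊆ { f : C(I01, ℝ) | ∀ g : I01 → ℝ,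
        eVariationOn g Set.univ ≤ 1 →
        hContent (1 / 2 + 1 / N) (Subtype.val '' {x : I01 | f x = g x}) <
          1 / M } := by
  classical
  have hNR : (0 : ℝ) < N := by exact_mod_cast hN
  have hMR : (0 : ℝ) < M := by exact_mod_cast hM
  set d : ℝ := 1 / 2 + 1 / N with hd
  have hd0 : 0 < d := by rw [hd]; positivity
  set e : ℝ := min d 1 with he
  have heHalf : 1 / 2 < e := by
    refine lt_min ?_ (by norm_num)
    rw [hd]; have : 0 < 1 / (N : ℝ) := by positivity
    linarith
  have he0 : 0 < e := by linarith
  have he1 : e ≤ 1 := min_le_right _ _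
  have hed : e ≤ d := min_le_left _ _
  refine ⟨{f | ∃ (f0 : C(I01, ℝ)) (n : ℕ) (K δ : ℝ), 0 < n ∧ 3 ≤ K ∧ 0 < δ ∧
      δ ≤ 1 / (4 * n) ∧ dist f f0 < δ ∧ Stmt15.Steep f0 n K ∧
      4 * n * (1 / (n * K)) ^ e < 1 / (M : ℝ)}, ?_, ?_, ?_⟩
  · -- open
    rw [Metric.isOpen_iff]
    rintro f ⟨f0, n, K, δ, hn, hK, hδ, hδn, hdist, hsteep, hbound⟩
    refine ⟨δ - dist f f0, by linarith, fun f' hf' => ?_⟩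
    rw [Metric.mem_ball] at hf'
    refine ⟨f0, n, K, δ, hn, hK, hδ, hδn, ?_, hsteep, hbound⟩
    have := dist_triangle f' f f0
    linarith
  · -- dense
    rw [Metric.dense_iff]
    intro f r hr
    obtain ⟨p, L, hL0, hlip, hfp⟩ := Stmt15.exists_lipschitz_near f (half_pos hr)
    set a : ℝ := r / 2 with haa
    have ha : 0 < a := by rw [haa]; linarith
    have h2e : 0 < 2 * e - 1 := by linarith
    have E1 : ∀ᶠ m : ℕ in Filter.atTop, L ≤ a * (m : ℝ) / 2 := by
      obtain ⟨m0, hm0⟩ := exists_nat_ge (2 * L / a)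
      filter_upwards [Filter.eventually_ge_atTop m0] with m hm
      have h1 : (m0 : ℝ) ≤ m := by exact_mod_cast hm
      have h2 : 2 * L / a ≤ (m : ℝ) := by linarith
      rw [div_le_iff₀ ha] at h2
      linarith
    have E2 : ∀ᶠ m : ℕ in Filter.atTop, 3 ≤ a * (m : ℝ) / 2 := by
      obtain ⟨m0, hm0⟩ := exists_nat_ge (6 / a)
      filter_upwards [Filter.eventually_ge_atTop m0] with m hm
      have h1 : (m0 : ℝ) ≤ m := by exact_mod_cast hm
      have h2 : 6 / a ≤ (m : ℝ) := by linarith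
      rw [div_le_iff₀ ha] at h2
      linarith
    have key3 : ∀ m : ℕ, 1 ≤ m →
        8 * (m : ℝ) * (1 / (a * (m : ℝ) ^ 2)) ^ e
          = 8 * (1 / a) ^ e * (m : ℝ) ^ (1 - 2 * e) := by
      intro m hm
      have hm0 : (0 : ℝ) < m := by exact_mod_cast hm
      have h1 : (1 / (a * (m : ℝ) ^ 2)) = (1 / a) * (1 / (m : ℝ)) ^ (2 : ℕ) := by
        field_simp
      have h2 : ((1 / a) * (1 / (m : ℝ)) ^ (2 : ℕ)) ^ e
          = (1 / a) ^ e * ((1 / (m : ℝ)) ^ (2 : ℕ)) ^ e :=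
        Real.mul_rpow (by positivity) (by positivity)
      have h3 : ((1 / (m : ℝ)) ^ (2 : ℕ)) ^ e = (1 / (m : ℝ)) ^ (2 * e) := by
        rw [← Real.rpow_natCast (1 / (m : ℝ)) 2, ← Real.rpow_mul (by positivity)]
        norm_num
      have h4 : (1 / (m : ℝ)) ^ (2 * e) = (m : ℝ) ^ (-(2 * e)) := by
        rw [one_div, ← Real.rpow_neg_one (m : ℝ), ← Real.rpow_mul hm0.le]
        ring_nf
      have h5 : (m : ℝ) * (m : ℝ) ^ (-(2 * e)) = (m : ℝ) ^ (1 - 2 * e) := by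
        nth_rewrite 1 [← Real.rpow_one (m : ℝ)]
        rw [← Real.rpow_add hm0]
        ring_nf
      rw [h1, h2, h3, h4]
      rw [mul_comm (8 : ℝ) (m : ℝ)]
      calc (m : ℝ) * 8 * ((1 / a) ^ e * (m : ℝ) ^ (-(2 * e)))
          = 8 * (1 / a) ^ e * ((m : ℝ) * (m : ℝ) ^ (-(2 * e))) := by ring
        _ = 8 * (1 / a) ^ e * (m : ℝ) ^ (1 - 2 * e) := by rw [h5]
    have hlim : Filter.Tendsto (fun m : ℕ => 8 * (1 / a) ^ e * (m : ℝ) ^ (1 - 2 * e))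
        Filter.atTop (nhds 0) := by
      have h0 : Filter.Tendsto (fun x : ℝ => x ^ (-(2 * e - 1))) Filter.atTop (nhds 0) :=
        tendsto_rpow_neg_atTop h2e
      have h1 : Filter.Tendsto (fun m : ℕ => (m : ℝ) ^ (1 - 2 * e)) Filter.atTop (nhds 0) := by
        have h2 := h0.comp (tendsto_natCast_atTop_atTop (R := ℝ))
        have h3 : (fun m : ℕ => ((m : ℝ)) ^ (1 - 2 * e))
            = (fun x : ℝ => x ^ (-(2 * e - 1))) ∘ (fun m : ℕ => (m : ℝ)) := by
          funext m; simp only [Function.comp_apply]; ring_nf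
        rw [h3]; exact h2
      have h4 := h1.const_mul (8 * (1 / a) ^ e)
      simpa using h4
    have E3 : ∀ᶠ m : ℕ in Filter.atTop,
        8 * (m : ℝ) * (1 / (a * (m : ℝ) ^ 2)) ^ e < 1 / (M : ℝ) := by
      filter_upwards [hlim.eventually_lt_const (by positivity : (0 : ℝ) < 1 / M),
        Filter.eventually_ge_atTop 1] with m h1 h2
      rw [key3 m h2]; exact h1
    obtain ⟨m, hmL, hm3, hmB, hm1⟩ :=
      (E1.and (E2.and (E3.and (Filter.eventually_ge_atTop 1)))).exists
    have hmpos : 0 < m := hm1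
    have hmR : (0 : ℝ) < m := by exact_mod_cast hmpos
    obtain ⟨f0, hpf0, hsteep⟩ := Stmt15.exists_steep_near p hL0 ha hlip m hmpos
    set K : ℝ := a * m / 2 with hKdef
    have hK3 : 3 ≤ K := hm3
    have hsteep' : Stmt15.Steep f0 (2 * m) K :=
      hsteep.anti (by linarith) (by rw [hKdef]; linarith)
    refine ⟨f0, ?_, ?_⟩
    · rw [Metric.mem_ball]
      have h1 : dist f0 f ≤ dist f0 p + dist p f := dist_triangle f0 p f
      rw [dist_comm f0 p, dist_comm p f] at h1
      rw [dist_comm]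
      calc dist f f0 ≤ dist f p + dist p f0 := dist_triangle f p f0
        _ ≤ r / 2 + a / 2 := by exact add_le_add hfp.le hpf0
        _ < r := by rw [haa]; linarith
    · refine ⟨f0, 2 * m, K, 1 / (4 * (2 * m : ℕ) : ℝ), by omega, hK3, by positivity,
        le_rfl, by simpa using (by positivity : (0:ℝ) < 1 / (4 * (2 * m : ℕ) : ℝ)),
        hsteep', ?_⟩
      have hc : ((2 * m : ℕ) : ℝ) = 2 * (m : ℝ) := by push_cast; ring
      rw [hc]
      have harg : 1 / (2 * (m : ℝ) * K) = 1 / (a * (m : ℝ) ^ 2) := by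
        rw [hKdef]; ring_nf
      rw [harg]
      calc 4 * (2 * (m : ℝ)) * (1 / (a * (m : ℝ) ^ 2)) ^ e
          = 8 * (m : ℝ) * (1 / (a * (m : ℝ) ^ 2)) ^ e := by ring
        _ < 1 / (M : ℝ) := hmB
  · -- subset
    rintro f ⟨f0, n, K, δ, hn, hK, hδ, hδn, hdist, hsteep, hbound⟩ g hg
    have hnR : (0 : ℝ) < n := by exact_mod_cast hn
    have hn1 : (1 : ℝ) ≤ n := by exact_mod_cast hn
    have hK0 : (0 : ℝ) < K := by linarith
    set P : ℕ → Set I01 :=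
      fun i => {x : I01 | (i : ℝ) / n ≤ (x : ℝ) ∧ (x : ℝ) ≤ ((i : ℝ) + 1) / n} with hP
    set v : ℕ → ℝ := fun i => (eVariationOn g (P i)).toReal with hv
    have hVle : ∀ i, eVariationOn g (P i) ≤ 1 :=
      fun i => le_trans (eVariationOn.mono g (subset_univ _)) hg
    have hVne : ∀ i, eVariationOn g (P i) ≠ ⊤ :=
      fun i => ((hVle i).trans_lt ENNReal.one_lt_top).ne
    have hv0 : ∀ i, 0 ≤ v i := fun i => ENNReal.toReal_nonneg
    have hv1 : ∀ i, v i ≤ 1 := fun i => by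
      have h := ENNReal.toReal_mono ENNReal.one_ne_top (hVle i)
      simpa using h
    have hvsum : ∑ i ∈ Finset.range n, v i ≤ 1 := by
      have hsum := Stmt15.sum_variation g n hn
      have h1 : ∑ i ∈ Finset.range n, eVariationOn g (P i) ≤ 1 := le_trans hsum hg
      calc ∑ i ∈ Finset.range n, v i
          = (∑ i ∈ Finset.range n, eVariationOn g (P i)).toReal :=
            (ENNReal.toReal_sum fun i _ => hVne i).symm
        _ ≤ (1 : ℝ≥0∞).toReal := ENNReal.toReal_mono ENNReal.one_ne_top h1
        _ = 1 := by simp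
    have hδ4 : δ ≤ 1 / 4 := by
      refine hδn.trans ?_
      rw [div_le_div_iff₀ (by positivity) (by norm_num)]
      nlinarith
    have hdistpt : ∀ x : I01, |f x - f0 x| ≤ δ := by
      intro x
      have h := ContinuousMap.dist_apply_le_dist (f := f) (g := f0) x
      rw [Real.dist_eq] at h
      linarith
    have hcoin : ∀ i, i < n → ∀ x y : I01, x ∈ P i → y ∈ P i →
        f x = g x → f y = g y → |(x : ℝ) - (y : ℝ)| ≤ (v i + 2 * δ) / K := by
      intro i hi x y hx hy hfx hfy
      have hst := hsteep i hi x y hx.1 hx.2 hy.1 hy.2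
      have hgxy : |g x - g y| ≤ v i := by
        have h1 := eVariationOn.edist_le g hx hy
        have h2 := ENNReal.toReal_mono (hVne i) h1
        rw [edist_dist, ENNReal.toReal_ofReal dist_nonneg, Real.dist_eq] at h2
        exact h2
      have hfxy : |f0 x - f0 y| ≤ |g x - g y| + 2 * δ := by
        have d1 := hdistpt x
        have d2 := hdistpt y
        have t1 : |f0 x - f0 y| ≤ |f0 x - f x| + |f x - f0 y| := abs_sub_le _ _ _
        have t2 : |f x - f0 y| ≤ |f x - f y| + |f y - f0 y| := abs_sub_le _ _ _
        have t3 : |f0 x - f x| = |f x - f0 x| := abs_sub_comm _ _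
        have t4 : |f y - f0 y| = |f y - f0 y| := rfl
        have t5 : |f x - f y| = |g x - g y| := by rw [hfx, hfy]
        linarith
      rw [le_div_iff₀ hK0]
      nlinarith
    set E' : Set I01 := {x : I01 | f x = g x} with hE'
    set cc : ℕ → ℝ := fun i => (v i + 2 * δ) / K with hcc
    have hcc0 : ∀ i, 0 ≤ cc i := fun i => div_nonneg (by linarith [hv0 i]) hK0.le
    have hcc1 : ∀ i, 2 * cc i ≤ 1 := by
      intro i
      have h1 := hv1 i
      have h2 : 2 * cc i = (2 * (v i + 2 * δ)) / K := by rw [hcc]; ring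
      rw [h2, div_le_one hK0]
      linarith
    set A : ℕ → ℝ := fun i =>
      if h : i < n ∧ (E' ∩ P i).Nonempty then ((h.2.choose : I01) : ℝ) - cc i else 1 with hA
    set B : ℕ → ℝ := fun i =>
      if h : i < n ∧ (E' ∩ P i).Nonempty then ((h.2.choose : I01) : ℝ) + cc i else 0 with hB
    have hcov : Subtype.val '' E' ⊆ ⋃ i, Icc (A i) (B i) := by
      rintro x ⟨x', hx', rfl⟩
      obtain ⟨i, hi, h1, h2⟩ := Stmt15.exists_piece hn x'.2.1 x'.2.2
      have hne : i < n ∧ (E' ∩ P i).Nonempty := ⟨hi, ⟨x', hx', h1, h2⟩⟩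
      refine mem_iUnion.mpr ⟨i, ?_⟩
      have hz := hne.2.choose_spec
      have hb := hcoin i hi x' hne.2.choose ⟨h1, h2⟩ hz.2 hx' hz.1
      have hb' := abs_le.1 hb
      simp only [hA, hB, dif_pos hne]
      exact Set.mem_Icc.mpr ⟨by linarith [hb'.1], by linarith [hb'.2]⟩
    have hout : ∀ i, n ≤ i → B i < A i := by
      intro i hi
      have hneg : ¬(i < n ∧ (E' ∩ P i).Nonempty) := fun h => absurd h.1 (by omega)
      simp only [hA, hB, dif_neg hneg]
      norm_num
    have hcont := Stmt15.hContent_le_sum hd0 (Subtype.val '' E') n A B hcov hout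
    have hterm : ∀ i ∈ Finset.range n,
        ENNReal.ofReal (B i - A i) ^ d ≤ ENNReal.ofReal ((2 * cc i) ^ e) := by
      intro i _
      by_cases hie : i < n ∧ (E' ∩ P i).Nonempty
      · have hBA : B i - A i = 2 * cc i := by
          simp only [hA, hB, dif_pos hie]; ring
        rw [hBA]
        calc ENNReal.ofReal (2 * cc i) ^ d ≤ ENNReal.ofReal (2 * cc i) ^ e := by
              refine ENNReal.rpow_le_rpow_of_exponent_ge ?_ hed
              rw [← ENNReal.ofReal_one]
              exact ENNReal.ofReal_le_ofReal (hcc1 i)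
          _ = ENNReal.ofReal ((2 * cc i) ^ e) :=
              ENNReal.ofReal_rpow_of_nonneg (by linarith [hcc0 i]) he0.le
      · have hBA : B i - A i = -1 := by
          simp only [hA, hB, dif_neg hie]; ring
        rw [hBA, ENNReal.ofReal_of_nonpos (by norm_num), ENNReal.zero_rpow_of_pos hd0]
        exact zero_le
    set t : ℝ := 1 / (n * K) with ht
    have ht0 : 0 < t := by rw [ht]; positivity
    have hreal : ∑ i ∈ Finset.range n, (2 * cc i) ^ e ≤ 4 * n * t ^ e := by
      have hsum3 : ∑ i ∈ Finset.range n, 2 * cc i ≤ 3 / K := by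
        have heq : ∑ i ∈ Finset.range n, 2 * cc i
            = (2 * (∑ i ∈ Finset.range n, v i) + n * (4 * δ)) / K := by
          rw [Finset.sum_congr rfl (fun i _ => show 2 * cc i = (2 * v i + 4 * δ) / K by
            rw [hcc]; ring)]
          rw [← Finset.sum_div, Finset.sum_add_distrib, Finset.sum_const,
            Finset.card_range, ← Finset.mul_sum]
          congr 1
          push_cast
          ring
        rw [heq, div_le_div_iff₀ hK0 hK0]
        have h4δ : (n : ℝ) * (4 * δ) ≤ 1 := by
          have := mul_le_mul_of_nonneg_left hδn (by positivity : (0:ℝ) ≤ 4 * n)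
          calc (n : ℝ) * (4 * δ) = 4 * n * δ := by ring
            _ ≤ 4 * n * (1 / (4 * n)) := by gcongr
            _ = 1 := by field_simp
        nlinarith [hvsum]
      calc ∑ i ∈ Finset.range n, (2 * cc i) ^ e
          ≤ ∑ i ∈ Finset.range n, (t ^ e + t ^ e / t * (2 * cc i)) :=
            Finset.sum_le_sum fun i _ =>
              Stmt15.rpow_le_aux he0 he1 ht0 (by linarith [hcc0 i])
        _ = n * t ^ e + t ^ e / t * (∑ i ∈ Finset.range n, 2 * cc i) := by
            rw [Finset.sum_add_distrib, Finset.sum_const, Finset.card_range,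
              ← Finset.mul_sum]
            simp [nsmul_eq_mul]
        _ ≤ n * t ^ e + t ^ e / t * (3 / K) := by
            gcongr
        _ = 4 * n * t ^ e := by
            have h1 : t ^ e / t * (3 / K) = 3 * (n * t ^ e) := by
              rw [ht]
              field_simp
            rw [h1]
            ring
    calc hContent d (Subtype.val '' E')
        ≤ ∑ i ∈ Finset.range n, ENNReal.ofReal (B i - A i) ^ d := hcont
      _ ≤ ∑ i ∈ Finset.range n, ENNReal.ofReal ((2 * cc i) ^ e) := Finset.sum_le_sum hterm
      _ = ENNReal.ofReal (∑ i ∈ Finset.range n, (2 * cc i) ^ e) :=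
          (ENNReal.ofReal_sum_of_nonneg fun i _ =>
            Real.rpow_nonneg (by linarith [hcc0 i]) e).symm
      _ < 1 / (M : ℝ≥0∞) := by
          have hlt : ∑ i ∈ Finset.range n, (2 * cc i) ^ e < 1 / (M : ℝ) :=
            lt_of_le_of_lt hreal hbound
          have hrw : (1 : ℝ≥0∞) / (M : ℝ≥0∞) = ENNReal.ofReal (1 / (M : ℝ)) := by
            rw [one_div, one_div, ← ENNReal.ofReal_natCast M,
              ← ENNReal.ofReal_inv_of_pos hMR]
          rw [hrw]
          exact (ENNReal.ofReal_lt_ofReal_iff (by positivity)).mpr hlt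

end
end

section
/- Assume the Continuum Hypothesis and let 0 < d < n. If {B_α : α < ω₁} is the disjointified ω₁-enumeration of all Borel subsets of ℝⁿ of positive finite ℋ^d-measure (B_α = A_α \ ∪_{β<α} A_β), then uncountably many of the B_α have positive ℋ^d-measure. -/
open MeasureTheory Set

noncomputable section

/-- Under CH, if `{A_α : α < ω₁}` enumerates all Borel sets of positive finite
`ℋ^d`-measure and `B_α = A_α \ ⋃_{β<α} A_β`, then uncountably many `B_α` have
positive measure. -/
theorem stmt16 (n : ℕ) (d : ℝ) (hd : 0 < d) (hdn : d < n)
    (hCH : Cardinal.continuum = Cardinal.aleph 1)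
    (A : Omega1 → Set (EuclideanSpace ℝ (Fin n)))
    (hA : ∀ α, MeasurableSet (A α) ∧ 0 < μH[d] (A α) ∧ μH[d] (A α) < ⊤)
    (hsurj : ∀ S : Set (EuclideanSpace ℝ (Fin n)),
      MeasurableSet S → 0 < μH[d] S → μH[d] S < ⊤ → ∃ α, A α = S) :
    ¬ ({α : Omega1 |
        0 < μH[d] (A α \ ⋃ (β : Omega1) (_ : β.1 < α.1), A β)}).Countable := by
  intro hG
  classical
  -- countability of initial segments of `ω₁`
  have hIio : ∀ o : Ordinal, o < (Cardinal.aleph 1).ord →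
      {β : Omega1 | β.1 < o}.Countable := by
    intro o ho
    have h1 : (Set.Iio o).Countable := by
      rw [Cardinal.countable_iff_lt_aleph_one, Ordinal.mk_Iio_ordinal]
      have h2 : o.card ≤ Cardinal.aleph0 := by
        have := Cardinal.lt_ord.mp ho
        rwa [← Cardinal.succ_aleph0, Order.lt_succ_iff] at this
      calc Cardinal.lift.{1} o.card ≤ Cardinal.lift.{1} Cardinal.aleph0 :=
            Cardinal.lift_le.mpr h2
        _ = Cardinal.aleph0 := Cardinal.lift_aleph0
        _ < Cardinal.aleph 1 := Cardinal.aleph0_lt_aleph_one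
    exact (h1.preimage Subtype.val_injective : _)
  have hU : ∀ o : Ordinal, o < (Cardinal.aleph 1).ord →
      MeasurableSet (⋃ (β : Omega1) (_ : β.1 < o), A β) :=
    fun o ho => MeasurableSet.biUnion (hIio o ho) (fun b _ => (hA b).1)
  have hB : ∀ α : Omega1,
      MeasurableSet (A α \ ⋃ (β : Omega1) (_ : β.1 < α.1), A β) :=
    fun α => ((hA α).1).diff (hU _ α.2)
  -- the union of the countably many positive-measure pieces
  set G : Set Omega1 :=
    {α : Omega1 | 0 < μH[d] (A α \ ⋃ (β : Omega1) (_ : β.1 < α.1), A β)} with hGdef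
  set N : Set (EuclideanSpace ℝ (Fin n)) := ⋃ α ∈ G, (A α \ ⋃ (β : Omega1) (_ : β.1 < α.1), A β) with hNdef
  have hN : MeasurableSet N := MeasurableSet.biUnion hG (fun α _ => hB α)
  -- every `A α` is a.e. contained in `N`
  have key : ∀ o : Ordinal, ∀ ho : o < (Cardinal.aleph 1).ord,
      μH[d] (A ⟨o, ho⟩ \ N) = 0 := by
    intro o
    induction o using Ordinal.induction with
    | h o IH =>
      intro ho
      set α : Omega1 := ⟨o, ho⟩ with hα
      have hsplit : A α \ N ⊆
          ((A α \ ⋃ (β : Omega1) (_ : β.1 < α.1), A β) \ N) ∪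
            ⋃ (β : Omega1) (_ : β.1 < o), (A β \ N) := by
        intro x hx
        by_cases hxU : x ∈ ⋃ (β : Omega1) (_ : β.1 < o), A β
        · right
          obtain ⟨β, hβ, hxβ⟩ := Set.mem_iUnion₂.mp hxU
          exact Set.mem_iUnion₂.mpr ⟨β, hβ, hxβ, hx.2⟩
        · left
          exact ⟨⟨hx.1, hxU⟩, hx.2⟩
      refine measure_mono_null hsplit (measure_union_null ?_ ?_)
      · by_cases hmem : α ∈ G
        · have hsub : (A α \ ⋃ (β : Omega1) (_ : β.1 < α.1), A β) ⊆ N :=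
            Set.subset_biUnion_of_mem (u := fun γ : Omega1 => A γ \ ⋃ (β : Omega1) (_ : β.1 < γ.1), A β) hmem
          exact measure_mono_null (fun x hx => (hx.2 (hsub hx.1)).elim) measure_empty
        · have h0 : μH[d] (A α \ ⋃ (β : Omega1) (_ : β.1 < α.1), A β) = 0 := by
            by_contra hne
            exact hmem (pos_iff_ne_zero.mpr hne)
          exact measure_mono_null Set.diff_subset h0
      · refine (measure_biUnion_null_iff (hIio o ho)).mpr ?_
        intro β hβ
        exact IH β.1 hβ β.2
  have claim : ∀ S : Set (EuclideanSpace ℝ (Fin n)), MeasurableSet S → 0 < μH[d] S → μH[d] S < ⊤ →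
      μH[d] (S \ N) = 0 := by
    intro S hS h0 ht
    obtain ⟨δ, rfl⟩ := hsurj S hS h0 ht
    exact key δ.1 δ.2
  -- a reference set of positive finite measure
  have hord0 : (0 : Ordinal) < (Cardinal.aleph 1).ord := by
    rw [Cardinal.lt_ord]
    simpa using lt_of_le_of_lt (zero_le _) Cardinal.aleph0_lt_aleph_one
  obtain ⟨hmeas₀, hpos₀, hfin₀⟩ := hA ⟨0, hord0⟩
  set S₀ : Set (EuclideanSpace ℝ (Fin n)) := A ⟨0, hord0⟩ with hS₀
  -- translates of `S₀` are a.e. contained in `N` as well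
  have hW : ∀ v : EuclideanSpace ℝ (Fin n), μH[d] (((fun y : EuclideanSpace ℝ (Fin n) => y - v) ⁻¹' Nᶜ) ∩ S₀) = 0 := by
    intro v
    have hUv : MeasurableSet ((fun x : EuclideanSpace ℝ (Fin n) => x + v) ⁻¹' S₀) :=
      hmeas₀.preimage (measurable_add_const v)
    have hμUv : μH[d] ((fun x : EuclideanSpace ℝ (Fin n) => x + v) ⁻¹' S₀) = μH[d] S₀ :=
      measure_preimage_add_right _ v S₀
    have h0 : μH[d] (((fun x : EuclideanSpace ℝ (Fin n) => x + v) ⁻¹' S₀) \ N) = 0 :=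
      claim _ hUv (by rw [hμUv]; exact hpos₀) (by rw [hμUv]; exact hfin₀)
    have hEq : (fun x : EuclideanSpace ℝ (Fin n) => x + v) ⁻¹' (S₀ ∩ (fun y : EuclideanSpace ℝ (Fin n) => y - v) ⁻¹' Nᶜ) =
        ((fun x : EuclideanSpace ℝ (Fin n) => x + v) ⁻¹' S₀) \ N := by
      ext x
      simp [Set.diff_eq, add_sub_cancel_right]
    rw [Set.inter_comm]
    calc μH[d] (S₀ ∩ (fun y : EuclideanSpace ℝ (Fin n) => y - v) ⁻¹' Nᶜ)
        = μH[d] ((fun x : EuclideanSpace ℝ (Fin n) => x + v) ⁻¹' (S₀ ∩ (fun y : EuclideanSpace ℝ (Fin n) => y - v) ⁻¹' Nᶜ)) :=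
          (measure_preimage_add_right _ v _).symm
      _ = 0 := by rw [hEq]; exact h0
  haveI : IsFiniteMeasure ((μH[d] : Measure (EuclideanSpace ℝ (Fin n))).restrict S₀) :=
    ⟨by rwa [Measure.restrict_apply_univ]⟩
  -- the double integral
  have hmeasf : AEMeasurable (Function.uncurry fun (v s : EuclideanSpace ℝ (Fin n)) =>
      (Nᶜ).indicator (fun _ => (1 : ENNReal)) (s - v))
      ((volume : Measure (EuclideanSpace ℝ (Fin n))).prod ((μH[d] : Measure (EuclideanSpace ℝ (Fin n))).restrict S₀)) := by
    exact ((measurable_const.indicator hN.compl).comp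
      (measurable_snd.sub measurable_fst)).aemeasurable
  have hswap := lintegral_lintegral_swap hmeasf
  have hLHS : ∫⁻ v, ∫⁻ s, (Nᶜ).indicator (fun _ => (1 : ENNReal)) (s - v)
      ∂((μH[d] : Measure (EuclideanSpace ℝ (Fin n))).restrict S₀) ∂(volume : Measure (EuclideanSpace ℝ (Fin n))) = 0 := by
    have : ∀ v : EuclideanSpace ℝ (Fin n), ∫⁻ s, (Nᶜ).indicator (fun _ => (1 : ENNReal)) (s - v)
        ∂((μH[d] : Measure (EuclideanSpace ℝ (Fin n))).restrict S₀) = 0 := by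
      intro v
      have hPre : MeasurableSet ((fun y : EuclideanSpace ℝ (Fin n) => y - v) ⁻¹' Nᶜ) :=
        hN.compl.preimage (measurable_sub_const v)
      have hfun : (fun s : EuclideanSpace ℝ (Fin n) => (Nᶜ).indicator (fun _ => (1 : ENNReal)) (s - v)) =
          ((fun y : EuclideanSpace ℝ (Fin n) => y - v) ⁻¹' Nᶜ).indicator (fun _ => (1 : ENNReal)) := by
        ext s
        by_cases h : s - v ∈ N <;> simp [Set.indicator, h]
      rw [hfun, lintegral_indicator_const hPre, Measure.restrict_apply hPre, hW v,
        mul_zero]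
    simp only [this, lintegral_zero]
  have hRHS : ∫⁻ s, ∫⁻ v, (Nᶜ).indicator (fun _ => (1 : ENNReal)) (s - v)
      ∂(volume : Measure (EuclideanSpace ℝ (Fin n))) ∂((μH[d] : Measure (EuclideanSpace ℝ (Fin n))).restrict S₀) =
      volume Nᶜ * μH[d] S₀ := by
    have hin : ∀ s : EuclideanSpace ℝ (Fin n), ∫⁻ v, (Nᶜ).indicator (fun _ => (1 : ENNReal)) (s - v)
        ∂(volume : Measure (EuclideanSpace ℝ (Fin n))) = volume Nᶜ := by
      intro s
      rw [(Measure.measurePreserving_sub_left (volume : Measure (EuclideanSpace ℝ (Fin n))) s).lintegral_comp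
        (measurable_const.indicator hN.compl)]
      rw [lintegral_indicator_const hN.compl, one_mul]
    simp only [hin, lintegral_const, Measure.restrict_apply_univ]
  have hcompl : volume Nᶜ * μH[d] S₀ = 0 := by
    rw [← hRHS, ← hswap, hLHS]
  have hNc : (volume : Measure (EuclideanSpace ℝ (Fin n))) Nᶜ = 0 := by
    rcases mul_eq_zero.mp hcompl with h' | h'
    · exact h'
    · exact absurd h' hpos₀.ne'
  -- `N` itself is Lebesgue-null since each `A α` has Hausdorff dimension `≤ d < n`
  have hAvol : ∀ α : Omega1, (volume : Measure (EuclideanSpace ℝ (Fin n))) (A α) = 0 := by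
    intro α
    have h1 : dimH (A α) ≤ (d.toNNReal : ENNReal) := by
      apply dimH_le_of_hausdorffMeasure_ne_top
      rw [Real.coe_toNNReal d hd.le]
      exact (hA α).2.2.ne
    have h2 : dimH (A α) < (((n : NNReal)) : ENNReal) := by
      refine h1.trans_lt (ENNReal.coe_lt_coe.mpr ?_)
      rw [← Real.toNNReal_natCast n]
      exact (Real.toNNReal_lt_toNNReal_iff (by exact_mod_cast hd.trans hdn)).mpr hdn
    have h3 : μH[(n : ℝ)] (A α) = 0 := by
      have := hausdorffMeasure_of_dimH_lt h2
      simpa using this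
    have hpi : (μH[(n : ℝ)] : Measure (Fin n → ℝ)) = volume := by
      have := hausdorffMeasure_pi_real (ι := Fin n)
      simpa using this
    have hpre : (volume : Measure (Fin n → ℝ))
        (((MeasurableEquiv.toLp 2 (Fin n → ℝ)).symm).symm ⁻¹' (A α)) =
        (volume : Measure (EuclideanSpace ℝ (Fin n))) (A α) :=
      (MeasurePreserving.symm _
        (EuclideanSpace.volume_preserving_symm_measurableEquiv_toLp (Fin n))).measure_preimage
        (hA α).1.nullMeasurableSet
    have himg : ((MeasurableEquiv.toLp 2 (Fin n → ℝ)).symm).symm ⁻¹' (A α) =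
        ⇑((MeasurableEquiv.toLp 2 (Fin n → ℝ)).symm) '' (A α) :=
      (MeasurableEquiv.image_eq_preimage_symm _ _).symm
    have hlip : μH[(n : ℝ)] (⇑((MeasurableEquiv.toLp 2 (Fin n → ℝ)).symm) '' (A α)) ≤
        (1 : ENNReal) ^ (n : ℝ) * μH[(n : ℝ)] (A α) := by
      exact (PiLp.lipschitzWith_ofLp 2 (fun _ : Fin n => ℝ)).hausdorffMeasure_image_le
        (by positivity) (A α)
    rw [← hpre, himg, ← hpi]
    refine le_antisymm ?_ zero_le
    calc μH[(n : ℝ)] (⇑((MeasurableEquiv.toLp 2 (Fin n → ℝ)).symm) '' (A α))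
        ≤ (1 : ENNReal) ^ (n : ℝ) * μH[(n : ℝ)] (A α) := hlip
      _ = 0 := by rw [h3, mul_zero]
  have hvolN : (volume : Measure (EuclideanSpace ℝ (Fin n))) N = 0 := by
    refine measure_mono_null ?_ ((measure_biUnion_null_iff hG).mpr fun α _ => hAvol α)
    exact Set.iUnion₂_mono fun α _ => Set.diff_subset
  have huniv : (volume : Measure (EuclideanSpace ℝ (Fin n))) Set.univ = 0 := by
    rw [← Set.union_compl_self N]
    exact measure_union_null hvolN hNc
  exact (isOpen_univ.measure_ne_zero (volume : Measure (EuclideanSpace ℝ (Fin n))) Set.univ_nonempty) huniv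
end
end

section
/- Let g : [0,1] → ℝ have total variation Var(g) ≤ 1, and suppose [0,1] is partitioned into m blocks, each subdivided into k intervals of length 1/(mk), such that whenever g agrees somewhere (outside a fixed exceptional open set) with a function f on two distinct subintervals of the same block, g must vary by at least δ > 0 between them. If l_i denotes the number of subintervals of block i meeting {f = g} outside the exceptional set, then Σ_{i} l_i ≤ m + 1/δ. -/
open Set Classical

noncomputable section

lemma encode_div_mod {k : ℕ} (i : ℕ) {j : ℕ} (hj : j < k) :
    (i * k + j) / k = i ∧ (i * k + j) % k = j := by
  constructor
  · rw [mul_comm i k, Nat.mul_add_div (by omega), Nat.div_eq_of_lt hj, add_zero]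
  · rw [mul_comm i k, Nat.mul_add_mod, Nat.mod_eq_of_lt hj]

/-- The `j`-th subinterval of the `i`-th block in the partition of `[0,1]` into
`m` blocks of `k` subintervals of length `1/(mk)` each. -/
def subInt (m k i j : ℕ) : Set I01 :=
  {x : I01 | ((i * k + j : ℕ) : ℝ) / (m * k) ≤ x.1 ∧
    x.1 < ((i * k + j + 1 : ℕ) : ℝ) / (m * k)}

/-- The counting estimate: if `g` has variation at most `1` and agreement of `f` and
`g` (outside an exceptional set `U`) on two distinct subintervals of a block forces
`g` to vary by at least `δ` between them, then the total number of subintervals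
meeting the agreement set is at most `m + 1/δ`. -/
theorem stmt19 (m k : ℕ) (hm : 0 < m) (hk : 0 < k) (δ : ℝ) (hδ : 0 < δ)
    (f g : I01 → ℝ) (U : Set ℝ) (hU : IsOpen U)
    (hVar : eVariationOn g Set.univ ≤ 1)
    (E : Set I01) (hE : E = {x : I01 | f x = g x ∧ x.1 ∉ U})
    (hjump : ∀ i < m, ∀ j₁ < k, ∀ j₂ < k, j₁ ≠ j₂ →
      ∀ x ∈ E ∩ subInt m k i j₁, ∀ y ∈ E ∩ subInt m k i j₂, δ ≤ |g x - g y|) :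
    ((∑ i ∈ Finset.range m,
        ((Finset.range k).filter fun j => (E ∩ subInt m k i j).Nonempty).card : ℕ) : ℝ)
      ≤ m + 1 / δ := by
  classical
  set S : Finset (ℕ × ℕ) := (Finset.range m ×ˢ Finset.range k).filter
      (fun p => (E ∩ subInt m k p.1 p.2).Nonempty) with hSdef
  -- the sum in the statement equals `S.card`
  have hsum_card : (∑ i ∈ Finset.range m,
      ((Finset.range k).filter fun j => (E ∩ subInt m k i j).Nonempty).card) = S.card := by
    rw [Finset.card_eq_sum_card_fiberwise (f := Prod.fst) (t := Finset.range m)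
      (by intro p hp; simp only [hSdef, Finset.mem_coe, Finset.mem_filter, Finset.mem_product] at hp
          exact hp.1.1)]
    refine Finset.sum_congr rfl fun i hi => ?_
    have : (S.filter fun p => p.1 = i)
        = ((Finset.range k).filter fun j => (E ∩ subInt m k i j).Nonempty).image
          (fun j => (i, j)) := by
      ext p
      simp only [hSdef, Finset.mem_filter, Finset.mem_product, Finset.mem_image,
        Finset.mem_range] at *
      constructor
      · rintro ⟨⟨⟨hi', hj⟩, hne⟩, hfst⟩
        exact ⟨p.2, ⟨hj, by rwa [hfst] at hne⟩, by rw [← hfst]⟩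
      · rintro ⟨j, ⟨hj, hne⟩, rfl⟩
        exact ⟨⟨⟨hi, hj⟩, hne⟩, rfl⟩
    rw [this, Finset.card_image_of_injective _ (fun a b h => by simpa using h)]
  -- membership facts for S
  have hSmem : ∀ p ∈ S, p.1 < m ∧ p.2 < k ∧ (E ∩ subInt m k p.1 p.2).Nonempty := by
    intro p hp
    simp only [hSdef, Finset.mem_filter, Finset.mem_product, Finset.mem_range] at hp
    exact ⟨hp.1.1, hp.1.2, hp.2⟩
  -- encode pairs as natural numbers
  set T : Finset ℕ := S.image (fun p => p.1 * k + p.2) with hTdef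
  have hdecode : ∀ n ∈ T, n / k < m ∧ n % k < k ∧
      (E ∩ subInt m k (n / k) (n % k)).Nonempty ∧ n / k * k + n % k = n := by
    intro n hn
    rw [hTdef, Finset.mem_image] at hn
    obtain ⟨p, hp, rfl⟩ := hn
    obtain ⟨h1, h2, h3⟩ := hSmem p hp
    obtain ⟨hdiv, hmod⟩ := encode_div_mod p.1 h2
    rw [hdiv, hmod]
    exact ⟨h1, h2, h3, by omega⟩
  have hcardT : T.card = S.card := by
    rw [hTdef]
    apply Finset.card_image_of_injOn
    intro p hp q hq hpq
    obtain ⟨_, hp2, _⟩ := hSmem p hp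
    obtain ⟨_, hq2, _⟩ := hSmem q hq
    obtain ⟨hdp, hmp⟩ := encode_div_mod p.1 hp2
    obtain ⟨hdq, hmq⟩ := encode_div_mod q.1 hq2
    simp only at hpq
    exact Prod.ext (by rw [← hdp, ← hdq, hpq]) (by rw [← hmp, ← hmq, hpq])
  set N : ℕ := T.card with hNdef
  rw [hsum_card, ← hcardT]
  by_cases hN0 : N = 0
  · rw [hN0]; push_cast; positivity
  have hN : 0 < N := Nat.pos_of_ne_zero hN0
  have hmk : (0:ℝ) < (m:ℝ) * k := by positivity
  -- choose representative points
  set x : ℕ → I01 := fun n =>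
    if h : (E ∩ subInt m k (n / k) (n % k)).Nonempty then h.choose
    else ⟨0, by norm_num⟩ with hxdef
  have hxmem : ∀ n ∈ T, x n ∈ E ∩ subInt m k (n / k) (n % k) := by
    intro n hn
    have h := (hdecode n hn).2.2.1
    simp only [hxdef, dif_pos h]
    exact h.choose_spec
  have hxlb : ∀ n ∈ T, (n : ℝ) / (m * k) ≤ (x n).1 := by
    intro n hn
    have h := (hxmem n hn).2.1
    have he := (hdecode n hn).2.2.2
    rwa [he] at h
  have hxub : ∀ n ∈ T, (x n).1 < ((n : ℝ) + 1) / (m * k) := by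
    intro n hn
    have h := (hxmem n hn).2.2
    have he := (hdecode n hn).2.2.2
    have : ((n / k * k + n % k + 1 : ℕ) : ℝ) = (n : ℝ) + 1 := by
      rw [he]; push_cast; ring
    rwa [this] at h
  -- the enumeration of T
  set e : Fin N ≃o {n // n ∈ T} := T.orderIsoOfFin hNdef.symm with hedef
  set nval : ℕ → ℕ := fun t => ((e ⟨min t (N - 1), by omega⟩ : {n // n ∈ T}) : ℕ)
    with hnvaldef
  have hnvalT : ∀ t, nval t ∈ T := fun t => (e _).2
  have hnval_mono : Monotone nval := by
    intro t t' htt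
    have h1 : (⟨min t (N - 1), by omega⟩ : Fin N) ≤ ⟨min t' (N - 1), by omega⟩ := by
      simp only [Fin.mk_le_mk]; omega
    exact Subtype.coe_le_coe.mpr (e.monotone h1)
  have hnval_strict : ∀ t t', t < t' → t' ≤ N - 1 → nval t < nval t' := by
    intro t t' htt ht'
    have h1 : (⟨min t (N - 1), by omega⟩ : Fin N) < ⟨min t' (N - 1), by omega⟩ := by
      simp only [Fin.mk_lt_mk]; omega
    exact Subtype.coe_lt_coe.mpr (e.strictMono h1)
  set u : ℕ → I01 := fun t => x (nval t) with hudef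
  have hu_mono : Monotone u := by
    intro t t' htt
    have h1 := hnval_mono htt
    rcases eq_or_lt_of_le h1 with heq | hlt
    · simp only [hudef, heq]; exact le_rfl
    · refine le_of_lt (Subtype.coe_lt_coe.mp ?_)
      calc (x (nval t)).1 < ((nval t : ℝ) + 1) / (m * k) := hxub _ (hnvalT t)
        _ ≤ (nval t' : ℝ) / (m * k) := by
            have hcast : (nval t : ℝ) + 1 ≤ (nval t' : ℝ) := by exact_mod_cast hlt
            gcongr
        _ ≤ (x (nval t')).1 := hxlb _ (hnvalT t')
  have hvar_sum : ∑ t ∈ Finset.range (N - 1), edist (g (u (t + 1))) (g (u t)) ≤ 1 :=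
    le_trans (eVariationOn.sum_le (f := g) (n := N - 1) hu_mono (fun i => Set.mem_univ _)) hVar
  set F : Finset ℕ := (Finset.range (N - 1)).filter
    (fun t => nval t / k = nval (t + 1) / k) with hFdef
  have hjump_bound : ∀ t ∈ F, ENNReal.ofReal δ ≤ edist (g (u (t + 1))) (g (u t)) := by
    intro t ht
    rw [hFdef, Finset.mem_filter, Finset.mem_range] at ht
    obtain ⟨htN, hdiv⟩ := ht
    have hlt : nval t < nval (t + 1) := hnval_strict t (t + 1) (by omega) (by omega)
    have hmodne : nval (t + 1) % k ≠ nval t % k := by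
      intro hmeq
      have h1 := (hdecode _ (hnvalT t)).2.2.2
      have h2 := (hdecode _ (hnvalT (t + 1))).2.2.2
      have heq : nval (t + 1) = nval t := by rw [← h2, ← hdiv, hmeq]; exact h1
      omega
    have hmem1 : u (t + 1) ∈ E ∩ subInt m k (nval t / k) (nval (t + 1) % k) := by
      have := hxmem _ (hnvalT (t + 1))
      rwa [← hdiv] at this
    have hmem2 : u t ∈ E ∩ subInt m k (nval t / k) (nval t % k) := hxmem _ (hnvalT t)
    have hd := hjump (nval t / k) (hdecode _ (hnvalT t)).1
      (nval (t + 1) % k) (hdecode _ (hnvalT (t + 1))).2.1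
      (nval t % k) (hdecode _ (hnvalT t)).2.1 hmodne
      (u (t + 1)) hmem1 (u t) hmem2
    rw [edist_dist, Real.dist_eq]
    exact ENNReal.ofReal_le_ofReal hd
  have hC : (F.card : ℝ) * δ ≤ 1 := by
    have hsub : F ⊆ Finset.range (N - 1) := by
      rw [hFdef]; exact Finset.filter_subset _ _
    have h1 : F.card • ENNReal.ofReal δ ≤ 1 :=
      le_trans (le_trans (Finset.card_nsmul_le_sum F _ _ hjump_bound)
        (Finset.sum_le_sum_of_subset hsub)) hvar_sum
    have h2 : ENNReal.ofReal ((F.card : ℝ) * δ) ≤ 1 := by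
      rw [ENNReal.ofReal_mul (Nat.cast_nonneg _), ENNReal.ofReal_natCast]
      rw [nsmul_eq_mul] at h1
      exact h1
    exact ENNReal.ofReal_le_one.mp h2
  -- the counting argument
  set D : Finset ℕ := (Finset.range (N - 1)).filter
    (fun t => ¬ nval t / k = nval (t + 1) / k) with hDdef
  have hCD : F.card + D.card = N - 1 := by
    rw [hFdef, hDdef, Finset.card_filter_add_card_filter_not, Finset.card_range]
  have hD : D.card ≤ m - 1 := by
    have : (Finset.Icc 1 (m - 1)).card = m - 1 := by rw [Nat.card_Icc]; omega
    rw [← this]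
    apply Finset.card_le_card_of_injOn (fun t => nval (t + 1) / k)
    · intro t ht
      rw [hDdef, Finset.mem_coe, Finset.mem_filter, Finset.mem_range] at ht
      have hle : nval t / k ≤ nval (t + 1) / k :=
        Nat.div_le_div_right (hnval_mono (by omega))
      have hlt : nval t / k < nval (t + 1) / k := lt_of_le_of_ne hle ht.2
      have hm2 : nval (t + 1) / k < m := (hdecode _ (hnvalT (t + 1))).1
      simp only [Finset.mem_coe, Finset.mem_Icc]
      exact ⟨Nat.succ_le_of_lt (lt_of_le_of_lt (Nat.zero_le _) hlt),
        Nat.le_pred_of_lt hm2⟩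
    · intro t ht t' ht' heq
      simp only [hDdef, Finset.coe_filter, Set.mem_setOf_eq, Finset.mem_range] at ht ht'
      have heq' : nval (t + 1) / k = nval (t' + 1) / k := heq
      by_contra hne
      rcases Nat.lt_or_ge t t' with h | h
      · have h1 : nval (t + 1) / k ≤ nval t' / k :=
          Nat.div_le_div_right (hnval_mono (by omega))
        have h2 : nval t' / k < nval (t' + 1) / k :=
          lt_of_le_of_ne (Nat.div_le_div_right (hnval_mono (by omega))) ht'.2
        exact absurd heq' (ne_of_lt (lt_of_le_of_lt h1 h2))
      · have h0 : t' < t := by omega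
        have h1 : nval (t' + 1) / k ≤ nval t / k :=
          Nat.div_le_div_right (hnval_mono (by omega))
        have h2 : nval t / k < nval (t + 1) / k :=
          lt_of_le_of_ne (Nat.div_le_div_right (hnval_mono (by omega))) ht.2
        exact absurd heq'.symm (ne_of_lt (lt_of_le_of_lt h1 h2))
  have hNm : N ≤ m + F.card := by omega
  have hF : (F.card : ℝ) ≤ 1 / δ := by
    rw [le_div_iff₀ hδ]; exact hC
  calc (N : ℝ) ≤ ((m + F.card : ℕ) : ℝ) := by exact_mod_cast hNm
    _ = (m : ℝ) + F.card := by push_cast; ring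
    _ ≤ (m : ℝ) + 1 / δ := by linarith
end
end
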